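/- arXiv:1901.10865 — 6 statements merged into one kernel-verified Lean document; each statement's English description precedes it below -/
import Mathlib

section
/- Let M ≥ 1, p > 2, a_i, b_i > 0, d_ij ≥ 0 (i ≠ j), d_ij = d_ji, α_ij, β_ij > 1, α_ij + β_ij = p, α_ji = β_ij, and suppose p·b_i > 2·Σ_{j≠i} d_ij β_ij for every i. Define J(s) = Σ_i a_i s_i² − Σ_i b_i s_i^p + Σ_{i≠j} d_ij s_j^{α_ij} s_i^{β_ij}. Then there exist 0 < r < R < ∞ such that sup_{s ∈ (0,∞)^M} J(s) = max_{s ∈ [r,R]^M} J(s); in particular, J attains its maximum on (0,∞)^M. -/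
open Finset

lemma rpow_sub_rpow_le (p : ℝ) (hp : 2 ≤ p) {x y : ℝ} (hx : 0 ≤ x) (hxy : x ≤ y) :
    y ^ p - x ^ p ≤ p / 2 * y ^ (p - 2) * (y ^ (2:ℝ) - x ^ (2:ℝ)) := by
  have hy : 0 ≤ y := hx.trans hxy
  rcases eq_or_lt_of_le hy with hy0 | hy0
  · have hx0 : x = 0 := le_antisymm (hxy.trans hy0.symm.le) hx
    rw [← hy0, hx0]
    simp
  set t : ℝ := x / y with ht
  have ht0 : 0 ≤ t := div_nonneg hx hy
  have hbern : 1 - t ^ p ≤ p / 2 * (1 - t ^ (2:ℝ)) := by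
    have h := one_add_mul_self_le_rpow_one_add
      (s := t ^ (2:ℝ) - 1) (by have := Real.rpow_nonneg ht0 (2:ℝ); linarith)
      (p := p / 2) (by linarith)
    have h2 : (1 + (t ^ (2:ℝ) - 1)) ^ (p / 2) = t ^ p := by
      rw [show (1 + (t ^ (2:ℝ) - 1)) = t ^ (2:ℝ) by ring, ← Real.rpow_mul ht0]
      congr 1
      ring
    rw [h2] at h
    linarith
  have hxy' : x = t * y := by rw [ht, div_mul_cancel₀ x hy0.ne']
  have hxp : x ^ p = t ^ p * y ^ p := by rw [hxy', Real.mul_rpow ht0 hy]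
  have hx2 : x ^ (2:ℝ) = t ^ (2:ℝ) * y ^ (2:ℝ) := by rw [hxy', Real.mul_rpow ht0 hy]
  have hyp : y ^ p = y ^ (p - 2) * y ^ (2:ℝ) := by
    rw [← Real.rpow_add hy0]
    ring_nf
  calc y ^ p - x ^ p = y ^ p * (1 - t ^ p) := by rw [hxp]; ring
    _ ≤ y ^ p * (p / 2 * (1 - t ^ (2:ℝ))) :=
        mul_le_mul_of_nonneg_left hbern (Real.rpow_nonneg hy p)
    _ = p / 2 * y ^ (p - 2) * (y ^ (2:ℝ) - x ^ (2:ℝ)) := by rw [hyp, hx2]; ring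

lemma phi_mono {a b p x y r : ℝ} (ha : 0 < a) (hb : 0 < b) (hp : 2 < p)
    (hx : 0 ≤ x) (hxy : x ≤ y) (hyr : y ≤ r)
    (hr : p / 2 * b * r ^ (p - 2) ≤ a) :
    a * x ^ (2:ℝ) - b * x ^ p ≤ a * y ^ (2:ℝ) - b * y ^ p := by
  have hy : 0 ≤ y := hx.trans hxy
  have h1 := rpow_sub_rpow_le p hp.le hx hxy
  have h2 : y ^ (p - 2) ≤ r ^ (p - 2) := Real.rpow_le_rpow hy hyr (by linarith)
  have hsq : x ^ (2:ℝ) ≤ y ^ (2:ℝ) := Real.rpow_le_rpow hx hxy (by norm_num)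
  have hS : 0 ≤ y ^ (2:ℝ) - x ^ (2:ℝ) := sub_nonneg.2 hsq
  have hpb : (0:ℝ) ≤ p / 2 * b := by nlinarith
  have key : b * (y ^ p - x ^ p) ≤ a * (y ^ (2:ℝ) - x ^ (2:ℝ)) := by
    calc b * (y ^ p - x ^ p) ≤ b * (p / 2 * y ^ (p - 2) * (y ^ (2:ℝ) - x ^ (2:ℝ))) :=
          mul_le_mul_of_nonneg_left h1 hb.le
      _ = (p / 2 * b * y ^ (p - 2)) * (y ^ (2:ℝ) - x ^ (2:ℝ)) := by ring
      _ ≤ (p / 2 * b * r ^ (p - 2)) * (y ^ (2:ℝ) - x ^ (2:ℝ)) := by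
          apply mul_le_mul_of_nonneg_right _ hS
          exact mul_le_mul_of_nonneg_left h2 hpb
      _ ≤ a * (y ^ (2:ℝ) - x ^ (2:ℝ)) := mul_le_mul_of_nonneg_right hr hS
  linarith

lemma young_pair {p A B x y : ℝ} (hp : 0 < p) (hx : 0 ≤ x) (hy : 0 ≤ y)
    (hA : 0 ≤ A) (hB : 0 ≤ B) (hsum : A + B = p) :
    x ^ A * y ^ B ≤ A / p * x ^ p + B / p * y ^ p := by
  have h := Real.geom_mean_le_arith_mean2_weighted (div_nonneg hA hp.le) (div_nonneg hB hp.le)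
    (Real.rpow_nonneg hx p) (Real.rpow_nonneg hy p)
    (by field_simp; linarith)
  rw [← Real.rpow_mul hx, ← Real.rpow_mul hy,
    show p * (A / p) = A by field_simp, show p * (B / p) = B by field_simp] at h
  exact h

lemma g_bounds {a c p : ℝ} (ha : 0 < a) (hc : 0 < c) (hp : 2 < p) :
    ∃ X : ℝ, 0 < X ∧ (∀ x, 0 ≤ x → a * x ^ (2:ℝ) - c * x ^ p ≤ a * X ^ (2:ℝ)) ∧
      ∀ x, X ≤ x → a * x ^ (2:ℝ) - c * x ^ p ≤ -(a * x ^ (2:ℝ)) := by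
  set X : ℝ := max 1 ((2 * a / c) ^ (1 / (p - 2))) with hX
  have hX1 : (1:ℝ) ≤ X := le_max_left _ _
  have hX0 : 0 < X := lt_of_lt_of_le one_pos hX1
  have hkey : ∀ x, X ≤ x → 2 * a * x ^ (2:ℝ) ≤ c * x ^ p := by
    intro x hx
    have hx1 : (1:ℝ) ≤ x := hX1.trans hx
    have hx0 : (0:ℝ) < x := lt_of_lt_of_le one_pos hx1
    have h1 : 2 * a / c ≤ x ^ (p - 2) := by
      have h2 : (2 * a / c) ^ (1 / (p - 2)) ≤ x := le_trans (le_max_right _ _) hx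
      have h3 := Real.rpow_le_rpow (Real.rpow_nonneg (by positivity) _) h2
        (by linarith : (0:ℝ) ≤ p - 2)
      rwa [← Real.rpow_mul (by positivity), one_div,
        inv_mul_cancel₀ (by linarith : p - 2 ≠ 0), Real.rpow_one] at h3
    have hxp : x ^ p = x ^ (p - 2) * x ^ (2:ℝ) := by rw [← Real.rpow_add hx0]; ring_nf
    calc 2 * a * x ^ (2:ℝ) = (2 * a / c) * x ^ (2:ℝ) * c := by field_simp
      _ ≤ x ^ (p - 2) * x ^ (2:ℝ) * c :=
          mul_le_mul_of_nonneg_right (mul_le_mul_of_nonneg_right h1 (Real.rpow_nonneg hx0.le _))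
            hc.le
      _ = c * x ^ p := by rw [hxp]; ring
  refine ⟨X, hX0, ?_, ?_⟩
  · intro x hx0
    rcases le_total x X with h | h
    · have h1 : a * x ^ (2:ℝ) ≤ a * X ^ (2:ℝ) :=
        mul_le_mul_of_nonneg_left (Real.rpow_le_rpow hx0 h (by norm_num)) ha.le
      have h2 : 0 ≤ c * x ^ p := by positivity
      linarith
    · have h2 := hkey x h
      have h3 : 0 ≤ a * X ^ (2:ℝ) := by positivity
      have h4 : 0 ≤ a * x ^ (2:ℝ) := by positivity
      linarith
  · intro x hx
    have h2 := hkey x hx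
    linarith
/-- Under the coercivity condition `p bᵢ > 2 Σ_{j≠i} dᵢⱼ βᵢⱼ`, the function `J`
attains its supremum over `(0,∞)^M` at a point of some box `[r,R]^M`. -/
theorem J_attains_max
    {M : ℕ} (hM : 1 ≤ M) (p : ℝ) (hp : 2 < p)
    (a b : Fin M → ℝ) (d α β : Fin M → Fin M → ℝ)
    (ha : ∀ i, 0 < a i) (hb : ∀ i, 0 < b i)
    (hd : ∀ i j, i ≠ j → 0 ≤ d i j)
    (hdsymm : ∀ i j, i ≠ j → d i j = d j i)
    (hα : ∀ i j, i ≠ j → 1 < α i j) (hβ : ∀ i j, i ≠ j → 1 < β i j)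
    (hαβp : ∀ i j, i ≠ j → α i j + β i j = p)
    (hsymm : ∀ i j, i ≠ j → α j i = β i j)
    (hcoer : ∀ i, 2 * ∑ j ∈ Finset.univ.filter (· ≠ i), d i j * β i j < p * b i)
    (J : (Fin M → ℝ) → ℝ)
    (hJ : ∀ s : Fin M → ℝ,
      J s = ∑ i, a i * s i ^ (2 : ℝ) - ∑ i, b i * s i ^ p
        + ∑ i, ∑ j ∈ Finset.univ.filter (· ≠ i),
            d i j * s j ^ α i j * s i ^ β i j) :
    ∃ r R : ℝ, 0 < r ∧ r < R ∧
      ∃ s₀ : Fin M → ℝ, (∀ i, s₀ i ∈ Set.Icc r R) ∧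
        ∀ s : Fin M → ℝ, (∀ i, 0 < s i) → J s ≤ J s₀ := by
  classical
  have hM' : (univ : Finset (Fin M)).Nonempty := ⟨⟨0, hM⟩, mem_univ _⟩
  have hp0 : (0:ℝ) < p := by linarith
  set c : Fin M → ℝ := fun i => b i - 2 / p * ∑ j ∈ univ.filter (· ≠ i), d i j * β i j
    with hcdef
  have hc : ∀ i, 0 < c i := by
    intro i
    have h := hcoer i
    have h2 : 2 / p * ∑ j ∈ univ.filter (· ≠ i), d i j * β i j < b i := by
      rw [div_mul_eq_mul_div, div_lt_iff₀ hp0]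
      nlinarith
    simp only [hcdef]
    linarith
  -- the coercive upper bound
  have hub : ∀ s : Fin M → ℝ, (∀ i, 0 ≤ s i) →
      J s ≤ ∑ i, (a i * s i ^ (2:ℝ) - c i * s i ^ p) := by
    intro s hs
    rw [hJ]
    have cross_le : (∑ i, ∑ j ∈ univ.filter (· ≠ i), d i j * s j ^ α i j * s i ^ β i j)
        ≤ ∑ i, (b i - c i) * s i ^ p := by
      have step1 : (∑ i, ∑ j ∈ univ.filter (· ≠ i), d i j * s j ^ α i j * s i ^ β i j)
          ≤ ∑ i, ∑ j ∈ univ.filter (· ≠ i),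
              ((d i j * α i j / p) * s j ^ p + (d i j * β i j / p) * s i ^ p) := by
        refine Finset.sum_le_sum fun i _ => Finset.sum_le_sum fun j hj => ?_
        have hij : j ≠ i := (Finset.mem_filter.1 hj).2
        have hy := young_pair hp0 (hs j) (hs i)
          (by linarith [hα i j (Ne.symm hij)] : 0 ≤ α i j)
          (by linarith [hβ i j (Ne.symm hij)] : 0 ≤ β i j)
          (hαβp i j (Ne.symm hij))
        calc d i j * s j ^ α i j * s i ^ β i j
            = d i j * (s j ^ α i j * s i ^ β i j) := by ring
          _ ≤ d i j * (α i j / p * s j ^ p + β i j / p * s i ^ p) :=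
              mul_le_mul_of_nonneg_left hy (hd i j (Ne.symm hij))
          _ = (d i j * α i j / p) * s j ^ p + (d i j * β i j / p) * s i ^ p := by ring
      have hswap : (∑ i, ∑ j ∈ univ.filter (· ≠ i), (d i j * α i j / p) * s j ^ p)
          = ∑ i, ∑ j ∈ univ.filter (· ≠ i), (d i j * β i j / p) * s i ^ p := by
        rw [Finset.sum_comm' (s := univ) (t := fun i => univ.filter (· ≠ i))
          (s' := fun j => univ.filter (· ≠ j)) (t' := univ)
          (by intro x y; simp [ne_comm])]
        refine Finset.sum_congr rfl fun j _ => Finset.sum_congr rfl fun i hi => ?_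
        have hij : i ≠ j := (Finset.mem_filter.1 hi).2
        rw [hdsymm i j hij, hsymm j i (Ne.symm hij)]
      have hcollect : (∑ i, ∑ j ∈ univ.filter (· ≠ i),
            ((d i j * α i j / p) * s j ^ p + (d i j * β i j / p) * s i ^ p))
          = ∑ i, (b i - c i) * s i ^ p := by
        calc (∑ i, ∑ j ∈ univ.filter (· ≠ i),
              ((d i j * α i j / p) * s j ^ p + (d i j * β i j / p) * s i ^ p))
            = (∑ i, ∑ j ∈ univ.filter (· ≠ i), (d i j * α i j / p) * s j ^ p)
              + ∑ i, ∑ j ∈ univ.filter (· ≠ i), (d i j * β i j / p) * s i ^ p := by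
              rw [← Finset.sum_add_distrib]
              exact Finset.sum_congr rfl fun i _ => Finset.sum_add_distrib
          _ = (∑ i, ∑ j ∈ univ.filter (· ≠ i), (d i j * β i j / p) * s i ^ p)
              + ∑ i, ∑ j ∈ univ.filter (· ≠ i), (d i j * β i j / p) * s i ^ p := by
              rw [hswap]
          _ = ∑ i, (b i - c i) * s i ^ p := by
              rw [← Finset.sum_add_distrib]
              refine Finset.sum_congr rfl fun i _ => ?_
              have hbc : b i - c i = 2 / p * ∑ j ∈ univ.filter (· ≠ i), d i j * β i j := by
                simp only [hcdef]
                ring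
              have e : ∑ j ∈ univ.filter (· ≠ i), (d i j * β i j / p) * s i ^ p
                  = (∑ j ∈ univ.filter (· ≠ i), d i j * β i j) * (s i ^ p / p) := by
                rw [Finset.sum_mul]
                exact Finset.sum_congr rfl fun j _ => by ring
              rw [e, hbc]
              ring
      exact step1.trans (le_of_eq hcollect)
    have e2 : ∑ i, (a i * s i ^ (2:ℝ) - c i * s i ^ p)
        = (∑ i, a i * s i ^ (2:ℝ) - ∑ i, b i * s i ^ p) + ∑ i, (b i - c i) * s i ^ p := by
      rw [← Finset.sum_sub_distrib, ← Finset.sum_add_distrib]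
      exact Finset.sum_congr rfl fun i _ => by ring
    linarith [cross_le]
  -- the inner radius r
  set r0 : Fin M → ℝ := fun i => (2 * a i / (p * b i)) ^ (1 / (p - 2)) with hr0def
  have hr0pos : ∀ i, 0 < r0 i := fun i =>
    Real.rpow_pos_of_pos (div_pos (by linarith [ha i]) (mul_pos hp0 (hb i))) _
  set r : ℝ := univ.inf' hM' r0 with hrdef
  have hrpos : 0 < r := (Finset.lt_inf'_iff hM').2 fun i _ => hr0pos i
  have hrle : ∀ i, r ≤ r0 i := fun i => Finset.inf'_le _ (mem_univ i)
  have hr0cap : ∀ i, p / 2 * b i * (r0 i) ^ (p - 2) ≤ a i := by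
    intro i
    have h1 : (r0 i) ^ (p - 2) = 2 * a i / (p * b i) := by
      simp only [hr0def]
      rw [← Real.rpow_mul (div_pos (by linarith [ha i]) (mul_pos hp0 (hb i))).le, one_div,
        inv_mul_cancel₀ (by linarith : p - 2 ≠ 0), Real.rpow_one]
    have hbne : b i ≠ 0 := ne_of_gt (hb i)
    have hpne : p ≠ 0 := ne_of_gt hp0
    rw [h1, show p / 2 * b i * (2 * a i / (p * b i)) = a i by field_simp]
  -- clamping small coordinates up to r
  have hclamp : ∀ s : Fin M → ℝ, (∀ i, 0 < s i) →
      J s ≤ J (fun i => max (s i) r) := by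
    intro s hs
    simp only [hJ]
    have hs'le : ∀ i, s i ≤ max (s i) r := fun i => le_max_left _ _
    have hs'0 : ∀ i, (0:ℝ) ≤ max (s i) r := fun i => le_trans hrpos.le (le_max_right _ _)
    have part1 : ∑ i, a i * s i ^ (2:ℝ) - ∑ i, b i * s i ^ p
        ≤ ∑ i, a i * (max (s i) r) ^ (2:ℝ) - ∑ i, b i * (max (s i) r) ^ p := by
      rw [← Finset.sum_sub_distrib, ← Finset.sum_sub_distrib]
      refine Finset.sum_le_sum fun i _ => ?_
      rcases le_total r (s i) with h | h
      · rw [max_eq_left h]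
      · rw [max_eq_right h]
        exact phi_mono (ha i) (hb i) hp (hs i).le h (hrle i) (hr0cap i)
    have part2 : (∑ i, ∑ j ∈ univ.filter (· ≠ i), d i j * s j ^ α i j * s i ^ β i j)
        ≤ ∑ i, ∑ j ∈ univ.filter (· ≠ i),
            d i j * (max (s j) r) ^ α i j * (max (s i) r) ^ β i j := by
      refine Finset.sum_le_sum fun i _ => Finset.sum_le_sum fun j hj => ?_
      have hij : j ≠ i := (Finset.mem_filter.1 hj).2
      have h1 : s j ^ α i j ≤ (max (s j) r) ^ α i j :=
        Real.rpow_le_rpow (hs j).le (hs'le j) (by linarith [hα i j (Ne.symm hij)])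
      have h2 : s i ^ β i j ≤ (max (s i) r) ^ β i j :=
        Real.rpow_le_rpow (hs i).le (hs'le i) (by linarith [hβ i j (Ne.symm hij)])
      have hd0 := hd i j (Ne.symm hij)
      calc d i j * s j ^ α i j * s i ^ β i j
          ≤ d i j * (max (s j) r) ^ α i j * s i ^ β i j :=
            mul_le_mul_of_nonneg_right (mul_le_mul_of_nonneg_left h1 hd0)
              (Real.rpow_nonneg (hs i).le _)
        _ ≤ d i j * (max (s j) r) ^ α i j * (max (s i) r) ^ β i j :=
            mul_le_mul_of_nonneg_left h2
              (mul_nonneg hd0 (Real.rpow_nonneg (hs'0 j) _))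
    linarith [part1, part2]
  -- per-coordinate bounds for the coercive majorant
  choose X hXpos hXbd hXtail using fun i => g_bounds (ha i) (hc i) hp
  set K : ℝ := ∑ i, a i * X i ^ (2:ℝ) with hKdef
  set V : ℝ := J (fun _ => r) with hVdef
  set amin : ℝ := univ.inf' hM' a with hamindef
  have haminpos : 0 < amin := (Finset.lt_inf'_iff hM').2 fun i _ => ha i
  have haminle : ∀ i, amin ≤ a i := fun i => Finset.inf'_le _ (mem_univ i)
  set m : ℝ := max ((K - V + 1) / amin) 0 with hmdef
  set R0 : ℝ := Real.sqrt m with hR0def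
  set R : ℝ := max (max R0 (r + 1)) (univ.sup' hM' X) with hRdef
  have hrR : r < R :=
    lt_of_lt_of_le (by linarith) (le_trans (le_max_right R0 (r+1)) (le_max_left _ _))
  have hR0le : R0 ≤ R := le_trans (le_max_left _ _) (le_max_left _ _)
  have hXle : ∀ i, X i ≤ R := fun i => le_trans (Finset.le_sup' _ (mem_univ i)) (le_max_right _ _)
  have hRpos : 0 < R := lt_trans hrpos hrR
  have hR02 : R0 ^ (2:ℝ) = m := by
    rw [hR0def, show ((2:ℝ)) = ((2:ℕ):ℝ) by norm_num, Real.rpow_natCast]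
    exact Real.sq_sqrt (le_max_right _ _)
  have hRbig : ∀ k, K - V < a k * R ^ (2:ℝ) := by
    intro k
    have h2 : R0 ^ (2:ℝ) ≤ R ^ (2:ℝ) :=
      Real.rpow_le_rpow (Real.sqrt_nonneg _) hR0le (by norm_num)
    have h3 : K - V + 1 ≤ amin * m := by
      have hle : (K - V + 1) / amin ≤ m := le_max_left _ _
      calc K - V + 1 = amin * ((K - V + 1) / amin) := by field_simp
        _ ≤ amin * m := mul_le_mul_of_nonneg_left hle haminpos.le
    have h4 : amin * R ^ (2:ℝ) ≤ a k * R ^ (2:ℝ) :=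
      mul_le_mul_of_nonneg_right (haminle k) (Real.rpow_nonneg hRpos.le _)
    have h5 : amin * R0 ^ (2:ℝ) ≤ amin * R ^ (2:ℝ) := mul_le_mul_of_nonneg_left h2 haminpos.le
    rw [hR02] at h5
    linarith
  -- the maximizer on the box
  have hboxc : IsCompact (Set.Icc (fun _ : Fin M => r) (fun _ => R)) := isCompact_Icc
  have hne : (fun _ : Fin M => r) ∈ Set.Icc (fun _ : Fin M => r) (fun _ => R) :=
    ⟨le_refl _, fun i => hrR.le⟩
  have hJcont : ContinuousOn J (Set.Icc (fun _ : Fin M => r) (fun _ => R)) := by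
    have hJeq : J = fun s => ∑ i, a i * s i ^ (2:ℝ) - ∑ i, b i * s i ^ p
        + ∑ i, ∑ j ∈ univ.filter (· ≠ i), d i j * s j ^ α i j * s i ^ β i j := funext hJ
    rw [hJeq]
    have hcoord : ∀ (i : Fin M) (e : ℝ),
        ContinuousOn (fun s : Fin M → ℝ => s i ^ e)
          (Set.Icc (fun _ : Fin M => r) (fun _ => R)) := by
      intro i e
      refine ContinuousOn.rpow_const (continuous_apply i).continuousOn fun s hs => Or.inl ?_
      exact ne_of_gt (lt_of_lt_of_le hrpos (hs.1 i))
    refine ContinuousOn.add (ContinuousOn.sub ?_ ?_) ?_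
    · exact continuousOn_finset_sum _ fun i _ => continuousOn_const.mul (hcoord i _)
    · exact continuousOn_finset_sum _ fun i _ => continuousOn_const.mul (hcoord i _)
    · exact continuousOn_finset_sum _ fun i _ => continuousOn_finset_sum _ fun j _ =>
        ((continuousOn_const.mul (hcoord j _)).mul (hcoord i _))
  obtain ⟨s₀, hs₀mem, hs₀max⟩ := hboxc.exists_isMaxOn ⟨_, hne⟩ hJcont
  refine ⟨r, R, hrpos, hrR, s₀, fun i => ⟨hs₀mem.1 i, hs₀mem.2 i⟩, ?_⟩
  intro s hs
  have h1 := hclamp s hs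
  set s' : Fin M → ℝ := fun i => max (s i) r with hs'def
  have hs'r : ∀ i, r ≤ s' i := fun i => le_max_right _ _
  by_cases hcase : ∀ i, s' i ≤ R
  · have hmem : s' ∈ Set.Icc (fun _ : Fin M => r) (fun _ => R) :=
      ⟨fun i => hs'r i, fun i => hcase i⟩
    exact h1.trans (hs₀max hmem)
  · push_neg at hcase
    obtain ⟨k, hk⟩ := hcase
    have h2 := hub s' fun i => le_trans hrpos.le (hs'r i)
    have hsplit : ∑ i, (a i * s' i ^ (2:ℝ) - c i * s' i ^ p)
        = (a k * s' k ^ (2:ℝ) - c k * s' k ^ p)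
          + ∑ i ∈ univ.erase k, (a i * s' i ^ (2:ℝ) - c i * s' i ^ p) :=
      (Finset.add_sum_erase _ _ (mem_univ k)).symm
    have htail : ∑ i ∈ univ.erase k, (a i * s' i ^ (2:ℝ) - c i * s' i ^ p) ≤ K := by
      calc ∑ i ∈ univ.erase k, (a i * s' i ^ (2:ℝ) - c i * s' i ^ p)
          ≤ ∑ i ∈ univ.erase k, a i * X i ^ (2:ℝ) :=
            Finset.sum_le_sum fun i _ => hXbd i _ (le_trans hrpos.le (hs'r i))
        _ ≤ K := Finset.sum_le_sum_of_subset_of_nonneg (Finset.subset_univ _)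
            fun i _ _ => by
              have h6 := hXpos i
              have h7 := ha i
              positivity
    have hhead : a k * s' k ^ (2:ℝ) - c k * s' k ^ p ≤ -(a k * R ^ (2:ℝ)) := by
      have h3 := hXtail k (s' k) (le_trans (hXle k) hk.le)
      have h4 : R ^ (2:ℝ) ≤ s' k ^ (2:ℝ) := Real.rpow_le_rpow hRpos.le hk.le (by norm_num)
      have h5 : a k * R ^ (2:ℝ) ≤ a k * s' k ^ (2:ℝ) := mul_le_mul_of_nonneg_left h4 (ha k).le
      linarith
    have hV : V ≤ J s₀ := hs₀max hne
    have hRb := hRbig k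
    rw [hsplit] at h2
    linarith
end

section
/- Under the hypotheses of the maximality lemma (p·b_i > 2·Σ_{j≠i} d_ij β_ij for all i), if s ∈ (0,∞)^M, i is an index with s_i = max{s_1,…,s_M}, and s_i ≥ R (with R chosen so that 2a_i t − (p b_i − 2 Σ_{j≠i} d_ij β_ij) t^{p−1} < 0 for t ≥ R), then ∂_i J(s) < 0. Similarly, if s_i ≤ r (with r chosen so that 2a_i t − p b_i t^{p−1} > 0 for t ∈ (0,r]), then ∂_i J(s) > 0. -/
open Finset

/-- Sign of the partial derivative `∂ᵢJ(s)` when `sᵢ` is the largest coordinate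
and `sᵢ ≥ R`, respectively when `sᵢ ≤ r`. -/
theorem partial_deriv_sign
    {M : ℕ} (hM : 1 ≤ M) (p : ℝ) (hp : 2 < p)
    (a b : Fin M → ℝ) (d α β : Fin M → Fin M → ℝ)
    (ha : ∀ i, 0 < a i) (hb : ∀ i, 0 < b i)
    (hd : ∀ i j, i ≠ j → 0 ≤ d i j)
    (hdsymm : ∀ i j, i ≠ j → d i j = d j i)
    (hα : ∀ i j, i ≠ j → 1 < α i j) (hβ : ∀ i j, i ≠ j → 1 < β i j)
    (hαβp : ∀ i j, i ≠ j → α i j + β i j = p)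
    (hsymm : ∀ i j, i ≠ j → α j i = β i j)
    (hcoer : ∀ i, 2 * ∑ j ∈ Finset.univ.filter (· ≠ i), d i j * β i j < p * b i)
    (r R : ℝ) (hr : 0 < r) (hrR : r < R)
    (hR : ∀ i, ∀ t ≥ R,
      2 * a i * t - (p * b i - 2 * ∑ j ∈ Finset.univ.filter (· ≠ i), d i j * β i j)
        * t ^ (p - 1) < 0)
    (hr' : ∀ i, ∀ t : ℝ, 0 < t → t ≤ r →
      0 < 2 * a i * t - p * b i * t ^ (p - 1))
    (s : Fin M → ℝ) (hs : ∀ i, 0 < s i) (i : Fin M) :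
    ((∀ j, s j ≤ s i) → R ≤ s i →
      2 * a i * s i - p * b i * s i ^ (p - 1)
        + 2 * ∑ j ∈ Finset.univ.filter (· ≠ i),
            d i j * β i j * s j ^ α i j * s i ^ (β i j - 1) < 0) ∧
    (s i ≤ r →
      0 < 2 * a i * s i - p * b i * s i ^ (p - 1)
        + 2 * ∑ j ∈ Finset.univ.filter (· ≠ i),
            d i j * β i j * s j ^ α i j * s i ^ (β i j - 1)) := by
  constructor
  · intro hmax hRi
    have hkey : ∀ j ∈ Finset.univ.filter (· ≠ i),
        d i j * β i j * s j ^ α i j * s i ^ (β i j - 1)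
          ≤ d i j * β i j * s i ^ (p - 1) := by
      intro j hj
      have hji : j ≠ i := (Finset.mem_filter.mp hj).2
      have hij : i ≠ j := hji.symm
      have h1 : s j ^ α i j ≤ s i ^ α i j :=
        Real.rpow_le_rpow (hs j).le (hmax j) (le_of_lt (lt_trans one_pos (hα i j hij)))
      have h2 : s j ^ α i j * s i ^ (β i j - 1) ≤ s i ^ α i j * s i ^ (β i j - 1) :=
        mul_le_mul_of_nonneg_right h1 (Real.rpow_nonneg (hs i).le _)
      have h3 : s i ^ α i j * s i ^ (β i j - 1) = s i ^ (p - 1) := by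
        rw [← Real.rpow_add (hs i)]
        congr 1
        have := hαβp i j hij; linarith
      have hdb : 0 ≤ d i j * β i j :=
        mul_nonneg (hd i j hij) (le_of_lt (lt_trans one_pos (hβ i j hij)))
      calc d i j * β i j * s j ^ α i j * s i ^ (β i j - 1)
          = d i j * β i j * (s j ^ α i j * s i ^ (β i j - 1)) := by ring
        _ ≤ d i j * β i j * (s i ^ α i j * s i ^ (β i j - 1)) :=
            mul_le_mul_of_nonneg_left h2 hdb
        _ = d i j * β i j * s i ^ (p - 1) := by rw [h3]
    have hsum : ∑ j ∈ Finset.univ.filter (· ≠ i),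
        d i j * β i j * s j ^ α i j * s i ^ (β i j - 1)
          ≤ (∑ j ∈ Finset.univ.filter (· ≠ i), d i j * β i j) * s i ^ (p - 1) := by
      rw [Finset.sum_mul]
      exact Finset.sum_le_sum hkey
    have := hR i (s i) hRi
    nlinarith [hsum]
  · intro hri
    have hpos : 0 ≤ ∑ j ∈ Finset.univ.filter (· ≠ i),
        d i j * β i j * s j ^ α i j * s i ^ (β i j - 1) := by
      apply Finset.sum_nonneg
      intro j hj
      have hij : i ≠ j := ((Finset.mem_filter.mp hj).2).symm
      exact mul_nonneg (mul_nonneg (mul_nonneg (hd i j hij)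
        (le_of_lt (lt_trans one_pos (hβ i j hij)))) (Real.rpow_nonneg (hs j).le _))
        (Real.rpow_nonneg (hs i).le _)
    have := hr' i (s i) (hs i) hri
    linarith
end

section
/- Let M ≥ 1, p > 2, a_i > 0, d_ij ≥ 0 (i ≠ j), d_ij = d_ji, α_ij, β_ij > 1, α_ij + β_ij = p, α_ji = β_ij. Suppose s ∈ (0,∞)^M satisfies, for each i, the system of equations 2 a_i (s_i − s_i^{p−1}) = 2 Σ_{j≠i} d_ij β_ij (s_i^{p−1} − s_j^{α_ij} s_i^{β_ij−1}). Then s_i = 1 for all i. -/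
open Finset

/-- If `s ∈ (0,∞)^M` satisfies
`2aᵢ(sᵢ − sᵢ^{p−1}) = 2 Σ_{j≠i} dᵢⱼ βᵢⱼ (sᵢ^{p−1} − sⱼ^{αᵢⱼ} sᵢ^{βᵢⱼ−1})` for
every `i`, then `s = (1,…,1)`. -/
theorem unique_critical_point_normalized
    {M : ℕ} (hM : 1 ≤ M) (p : ℝ) (hp : 2 < p)
    (a : Fin M → ℝ) (d α β : Fin M → Fin M → ℝ)
    (ha : ∀ i, 0 < a i)
    (hd : ∀ i j, i ≠ j → 0 ≤ d i j)
    (hdsymm : ∀ i j, i ≠ j → d i j = d j i)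
    (hα : ∀ i j, i ≠ j → 1 < α i j) (hβ : ∀ i j, i ≠ j → 1 < β i j)
    (hαβp : ∀ i j, i ≠ j → α i j + β i j = p)
    (hsymm : ∀ i j, i ≠ j → α j i = β i j)
    (s : Fin M → ℝ) (hs : ∀ i, 0 < s i)
    (hsys : ∀ i, 2 * a i * (s i - s i ^ (p - 1)) =
      2 * ∑ j ∈ Finset.univ.filter (· ≠ i),
        d i j * β i j * (s i ^ (p - 1) - s j ^ α i j * s i ^ (β i j - 1))) :
    ∀ i, s i = 1 := by
  have hne : (Finset.univ : Finset (Fin M)).Nonempty := ⟨⟨0, hM⟩, Finset.mem_univ _⟩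
  have hmerge : ∀ i j, i ≠ j → α i j + (β i j - 1) = p - 1 := by
    intro i j hij
    have := hαβp i j hij
    linarith
  have keymax : ∀ i, (∀ j, s j ≤ s i) → s i ≤ 1 := by
    intro i hmax
    by_contra h
    push_neg at h
    have hi := hs i
    have hLHS : 2 * a i * (s i - s i ^ (p - 1)) < 0 := by
      have h1 : s i < s i ^ (p - 1) := by
        nth_rewrite 1 [← Real.rpow_one (s i)]
        exact (Real.rpow_lt_rpow_left_iff h).mpr (by linarith)
      have hai := ha i
      nlinarith
    have hRHS : 0 ≤ 2 * ∑ j ∈ Finset.univ.filter (· ≠ i),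
        d i j * β i j * (s i ^ (p - 1) - s j ^ α i j * s i ^ (β i j - 1)) := by
      have hsum : 0 ≤ ∑ j ∈ Finset.univ.filter (· ≠ i),
          d i j * β i j * (s i ^ (p - 1) - s j ^ α i j * s i ^ (β i j - 1)) := by
        apply Finset.sum_nonneg
        intro j hj
        have hji : j ≠ i := by simpa using hj
        have hij : i ≠ j := hji.symm
        have hα0 : (0:ℝ) < α i j := lt_trans one_pos (hα i j hij)
        have h1 : s j ^ α i j * s i ^ (β i j - 1) ≤ s i ^ (p - 1) := by
          have h2 : s j ^ α i j ≤ s i ^ α i j :=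
            Real.rpow_le_rpow (hs j).le (hmax j) hα0.le
          have h3 : (0:ℝ) < s i ^ (β i j - 1) := Real.rpow_pos_of_pos hi _
          calc s j ^ α i j * s i ^ (β i j - 1)
              ≤ s i ^ α i j * s i ^ (β i j - 1) := by nlinarith
            _ = s i ^ (α i j + (β i j - 1)) := (Real.rpow_add hi _ _).symm
            _ = s i ^ (p - 1) := by rw [hmerge i j hij]
        have hd0 := hd i j hij
        have hβ0 : (0:ℝ) < β i j := lt_trans one_pos (hβ i j hij)
        exact mul_nonneg (mul_nonneg hd0 hβ0.le) (by linarith)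
      linarith
    have := hsys i
    linarith
  have keymin : ∀ i, (∀ j, s i ≤ s j) → 1 ≤ s i := by
    intro i hmin
    by_contra h
    push_neg at h
    have hi := hs i
    have hLHS : 0 < 2 * a i * (s i - s i ^ (p - 1)) := by
      have h1 : s i ^ (p - 1) < s i := by
        nth_rewrite 2 [← Real.rpow_one (s i)]
        exact (Real.rpow_lt_rpow_left_iff_of_base_lt_one hi h).mpr (by linarith)
      have hai := ha i
      nlinarith
    have hRHS : 2 * ∑ j ∈ Finset.univ.filter (· ≠ i),
        d i j * β i j * (s i ^ (p - 1) - s j ^ α i j * s i ^ (β i j - 1)) ≤ 0 := by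
      have hsum : ∑ j ∈ Finset.univ.filter (· ≠ i),
          d i j * β i j * (s i ^ (p - 1) - s j ^ α i j * s i ^ (β i j - 1)) ≤ 0 := by
        apply Finset.sum_nonpos
        intro j hj
        have hji : j ≠ i := by simpa using hj
        have hij : i ≠ j := hji.symm
        have hα0 : (0:ℝ) < α i j := lt_trans one_pos (hα i j hij)
        have h1 : s i ^ (p - 1) ≤ s j ^ α i j * s i ^ (β i j - 1) := by
          have h2 : s i ^ α i j ≤ s j ^ α i j :=
            Real.rpow_le_rpow hi.le (hmin j) hα0.le
          have h3 : (0:ℝ) < s i ^ (β i j - 1) := Real.rpow_pos_of_pos hi _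
          calc s i ^ (p - 1) = s i ^ (α i j + (β i j - 1)) := by rw [hmerge i j hij]
            _ = s i ^ α i j * s i ^ (β i j - 1) := Real.rpow_add hi _ _
            _ ≤ s j ^ α i j * s i ^ (β i j - 1) := by nlinarith
        have hd0 := hd i j hij
        have hβ0 : (0:ℝ) < β i j := lt_trans one_pos (hβ i j hij)
        exact mul_nonpos_of_nonneg_of_nonpos (mul_nonneg hd0 hβ0.le) (by linarith)
      linarith
    have := hsys i
    linarith
  obtain ⟨imax, -, hmax⟩ := Finset.exists_max_image Finset.univ s hne
  obtain ⟨imin, -, hmin⟩ := Finset.exists_min_image Finset.univ s hne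
  have h1 : s imax ≤ 1 := keymax imax (fun j => hmax j (Finset.mem_univ j))
  have h2 : 1 ≤ s imin := keymin imin (fun j => hmin j (Finset.mem_univ j))
  intro i
  have := hmax i (Finset.mem_univ i)
  have := hmin i (Finset.mem_univ i)
  linarith
end

section
/- Let J(s) = Σ_{i=1}^M a_i s_i² − Σ_{i=1}^M b_i s_i^p + Σ_{i≠j} d_ij s_j^{α_ij} s_i^{β_ij} with a_i, b_i > 0, d_ij ≥ 0, d_ij = d_ji, α_ij, β_ij > 1, α_ij + β_ij = p > 2, α_ji = β_ij. If J has a critical point in (0,∞)^M, then it is unique and it is a global maximum of J on (0,∞)^M. -/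
open Finset

/-- Young's inequality specialised: `x^2 ≤ (2/p) x^p + (1 - 2/p)` for `p > 2`, `x > 0`. -/
private lemma young2 {p x : ℝ} (hp : 2 < p) (hx : 0 < x) :
    x ^ (2:ℝ) ≤ 2/p * x ^ p + (1 - 2/p) := by
  have hp0 : (0:ℝ) < p := by linarith
  have h := Real.geom_mean_le_arith_mean2_weighted
    (w₁ := 2/p) (w₂ := 1 - 2/p) (p₁ := x ^ p) (p₂ := 1)
    (by positivity) (by rw [sub_nonneg, div_le_one hp0]; linarith)
    (Real.rpow_pos_of_pos hx p).le zero_le_one (by ring)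
  have hxx : (x ^ p) ^ (2/p) = x ^ (2:ℝ) := by
    rw [← Real.rpow_mul hx.le]
    congr 1
    field_simp
  rw [hxx, Real.one_rpow, mul_one, mul_one] at h
  exact h

/-- Young's inequality: `y^α x^β ≤ (α/p) y^p + (β/p) x^p` when `α+β = p`. -/
private lemma young_ab {p al be x y : ℝ} (hal : 0 < al) (hbe : 0 < be)
    (hab : al + be = p) (hx : 0 < x) (hy : 0 < y) :
    y ^ al * x ^ be ≤ al/p * y ^ p + be/p * x ^ p := by
  have hp0 : (0:ℝ) < p := by linarith
  have h := Real.geom_mean_le_arith_mean2_weighted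
    (w₁ := al/p) (w₂ := be/p) (p₁ := y ^ p) (p₂ := x ^ p)
    (by positivity) (by positivity)
    (Real.rpow_pos_of_pos hy p).le (Real.rpow_pos_of_pos hx p).le
    (by field_simp; linarith)
  have h1 : (y ^ p) ^ (al/p) = y ^ al := by
    rw [← Real.rpow_mul hy.le]; congr 1; field_simp
  have h2 : (x ^ p) ^ (be/p) = x ^ be := by
    rw [← Real.rpow_mul hx.le]; congr 1; field_simp
  rwa [h1, h2] at h

private lemma swap_sum {M : ℕ} (F : Fin M → Fin M → ℝ) :
    ∑ i, ∑ j ∈ Finset.univ.filter (· ≠ i), F i j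
      = ∑ i, ∑ j ∈ Finset.univ.filter (· ≠ i), F j i := by
  simp only [Finset.sum_filter]
  rw [Finset.sum_comm]
  refine Finset.sum_congr rfl fun i _ => Finset.sum_congr rfl fun j _ => ?_
  rcases eq_or_ne i j with h | h
  · simp [h]
  · simp [h, h.symm]

/-- Rewriting `∑ B i * v i` using the critical point relation at `1`. -/
private lemma B_sum_eq {M : ℕ} {p : ℝ} (A B : Fin M → ℝ) (D al be : Fin M → Fin M → ℝ)
    (hp : 2 < p)
    (hDsymm : ∀ i j, i ≠ j → D i j = D j i)
    (hbesymm : ∀ i j, i ≠ j → be j i = al i j)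
    (hcrit1 : ∀ i, 2 * A i - p * B i
      + 2 * ∑ j ∈ Finset.univ.filter (· ≠ i), D i j * be i j = 0)
    (v : Fin M → ℝ) :
    ∑ i, B i * v i = ∑ i, (2/p * A i * v i)
      + ∑ i, ∑ j ∈ Finset.univ.filter (· ≠ i),
          (1/p * (D i j * be i j) * v i + 1/p * (D i j * al i j) * v j) := by
  have hp0 : (0:ℝ) < p := by linarith
  have hBdef : ∀ i, B i * v i = 2/p * A i * v i
      + ∑ j ∈ Finset.univ.filter (· ≠ i), (2/p * (D i j * be i j) * v i) := by
    intro i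
    have h := hcrit1 i
    have hB : B i = 2/p * A i
        + 2/p * ∑ j ∈ Finset.univ.filter (· ≠ i), D i j * be i j := by
      field_simp
      linarith
    rw [hB, add_mul, Finset.mul_sum, Finset.sum_mul]
    try ring_nf
  calc ∑ i, B i * v i
      = ∑ i, (2/p * A i * v i
          + ∑ j ∈ Finset.univ.filter (· ≠ i), (2/p * (D i j * be i j) * v i)) :=
        Finset.sum_congr rfl fun i _ => hBdef i
    _ = ∑ i, (2/p * A i * v i)
        + ∑ i, ∑ j ∈ Finset.univ.filter (· ≠ i), (2/p * (D i j * be i j) * v i) :=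
        Finset.sum_add_distrib
    _ = ∑ i, (2/p * A i * v i)
        + ∑ i, ∑ j ∈ Finset.univ.filter (· ≠ i),
            (1/p * (D i j * be i j) * v i + 1/p * (D i j * al i j) * v j) := by
        congr 1
        have hsw : ∑ i, ∑ j ∈ Finset.univ.filter (· ≠ i), (1/p * (D i j * al i j) * v j)
            = ∑ i, ∑ j ∈ Finset.univ.filter (· ≠ i), (1/p * (D i j * be i j) * v i) := by
          rw [swap_sum (fun i j => 1/p * (D i j * al i j) * v j)]
          refine Finset.sum_congr rfl fun i _ => Finset.sum_congr rfl fun j hj => ?_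
          have hji : j ≠ i := by simpa using (Finset.mem_filter.mp hj).2
          rw [← hDsymm i j hji.symm, hbesymm j i hji]
        have expand : ∑ i, ∑ j ∈ Finset.univ.filter (· ≠ i),
            (1/p * (D i j * be i j) * v i + 1/p * (D i j * al i j) * v j)
            = ∑ i, ∑ j ∈ Finset.univ.filter (· ≠ i), (1/p * (D i j * be i j) * v i)
              + ∑ i, ∑ j ∈ Finset.univ.filter (· ≠ i), (1/p * (D i j * al i j) * v j) := by
          rw [← Finset.sum_add_distrib]
          exact Finset.sum_congr rfl fun i _ => Finset.sum_add_distrib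
        rw [expand, hsw, ← Finset.sum_add_distrib]
        refine Finset.sum_congr rfl fun i _ => ?_
        rw [← Finset.sum_add_distrib]
        exact Finset.sum_congr rfl fun j _ => by ring

/-- Maximality: if `1` is a critical point, it is a global max on the positive orthant. -/
private lemma crit1_max {M : ℕ} {p : ℝ} (A B : Fin M → ℝ) (D al be : Fin M → Fin M → ℝ)
    (hp : 2 < p)
    (hA : ∀ i, 0 < A i)
    (hD : ∀ i j, i ≠ j → 0 ≤ D i j)
    (hDsymm : ∀ i j, i ≠ j → D i j = D j i)
    (hal : ∀ i j, i ≠ j → 1 < al i j) (hbe : ∀ i j, i ≠ j → 1 < be i j)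
    (habp : ∀ i j, i ≠ j → al i j + be i j = p)
    (hbesymm : ∀ i j, i ≠ j → be j i = al i j)
    (hcrit1 : ∀ i, 2 * A i - p * B i
      + 2 * ∑ j ∈ Finset.univ.filter (· ≠ i), D i j * be i j = 0)
    (u : Fin M → ℝ) (hu : ∀ i, 0 < u i) :
    ∑ i, A i * u i ^ (2:ℝ) - ∑ i, B i * u i ^ p
      + ∑ i, ∑ j ∈ Finset.univ.filter (· ≠ i), D i j * u j ^ al i j * u i ^ be i j
    ≤ ∑ i, A i - ∑ i, B i
      + ∑ i, ∑ j ∈ Finset.univ.filter (· ≠ i), D i j := by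
  have hp0 : (0:ℝ) < p := by linarith
  have e1 := B_sum_eq A B D al be hp hDsymm hbesymm hcrit1 (fun i => u i ^ p)
  have e2 := B_sum_eq A B D al be hp hDsymm hbesymm hcrit1 (fun _ => (1:ℝ))
  simp only [mul_one] at e2
  rw [e1, e2]
  have main :
      ∑ i, (A i * u i ^ (2:ℝ) - 2/p * A i * u i ^ p)
        + ∑ i, ∑ j ∈ Finset.univ.filter (· ≠ i),
            (D i j * u j ^ al i j * u i ^ be i j
              - (1/p * (D i j * be i j) * u i ^ p + 1/p * (D i j * al i j) * u j ^ p))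
      ≤ ∑ i, (A i - 2/p * A i)
        + ∑ i, ∑ j ∈ Finset.univ.filter (· ≠ i),
            (D i j - (1/p * (D i j * be i j) + 1/p * (D i j * al i j))) := by
    refine add_le_add (Finset.sum_le_sum fun i _ => ?_)
      (Finset.sum_le_sum fun i _ => Finset.sum_le_sum fun j hj => ?_)
    · have key := mul_le_mul_of_nonneg_left (young2 hp (hu i)) (hA i).le
      ring_nf at key ⊢
      linarith
    · have hji : j ≠ i := by simpa using (Finset.mem_filter.mp hj).2
      have hij : i ≠ j := hji.symm
      have hy := young_ab (lt_trans one_pos (hal i j hij)) (lt_trans one_pos (hbe i j hij))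
        (habp i j hij) (hu i) (hu j)
      have key := mul_le_mul_of_nonneg_left hy (hD i j hij)
      have h1 : 1/p * (D i j * be i j) + 1/p * (D i j * al i j) = D i j := by
        have hab := habp i j hij
        field_simp
        linear_combination D i j * hab
      ring_nf at key h1 ⊢
      linarith
  simp only [Finset.sum_add_distrib, Finset.sum_sub_distrib] at main ⊢
  linarith

/-- Uniqueness: `1` is the only positive critical point. -/
private lemma crit1_unique {M : ℕ} {p : ℝ} (A B : Fin M → ℝ) (D al be : Fin M → Fin M → ℝ)
    (hM : 1 ≤ M) (hp : 2 < p)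
    (hA : ∀ i, 0 < A i)
    (hD : ∀ i j, i ≠ j → 0 ≤ D i j)
    (hal : ∀ i j, i ≠ j → 1 < al i j)
    (hbe : ∀ i j, i ≠ j → 1 < be i j)
    (habp : ∀ i j, i ≠ j → al i j + be i j = p)
    (hcrit1 : ∀ i, 2 * A i - p * B i
      + 2 * ∑ j ∈ Finset.univ.filter (· ≠ i), D i j * be i j = 0)
    (u : Fin M → ℝ) (hu : ∀ i, 0 < u i)
    (hcu : ∀ i, 2 * A i * u i - p * B i * u i ^ (p - 1)
      + 2 * ∑ j ∈ Finset.univ.filter (· ≠ i),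
          D i j * be i j * u j ^ al i j * u i ^ (be i j - 1) = 0) :
    ∀ i, u i = 1 := by
  have hp0 : (0:ℝ) < p := by linarith
  haveI : Nonempty (Fin M) := ⟨⟨0, hM⟩⟩
  -- Generic bound step
  have bound : ∀ m : Fin M, (∀ j, u j ≤ u m) → u m ≤ 1 := by
    intro m hm
    by_contra hgt
    push_neg at hgt
    have hum := hu m
    have hup : u m < u m ^ (p-1) := by
      have := Real.rpow_lt_rpow_of_exponent_lt hgt (by linarith : (1:ℝ) < p - 1)
      rwa [Real.rpow_one] at this
    -- bound the interaction sum
    have hsum : ∑ j ∈ Finset.univ.filter (· ≠ m),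
        D m j * be m j * u j ^ al m j * u m ^ (be m j - 1)
        ≤ (∑ j ∈ Finset.univ.filter (· ≠ m), D m j * be m j) * u m ^ (p-1) := by
      rw [Finset.sum_mul]
      refine Finset.sum_le_sum fun j hj => ?_
      have hjm : j ≠ m := by simpa using (Finset.mem_filter.mp hj).2
      have hmj : m ≠ j := hjm.symm
      have h1 : u j ^ al m j ≤ u m ^ al m j :=
        Real.rpow_le_rpow (hu j).le (hm j) (by linarith [hal m j hmj])
      have h2 : u m ^ al m j * u m ^ (be m j - 1) = u m ^ (p-1) := by
        rw [← Real.rpow_add hum]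
        congr 1
        linarith [habp m j hmj]
      have hDb : 0 ≤ D m j * be m j :=
        mul_nonneg (hD m j hmj) (by linarith [hbe m j hmj])
      calc D m j * be m j * u j ^ al m j * u m ^ (be m j - 1)
          ≤ D m j * be m j * u m ^ al m j * u m ^ (be m j - 1) := by
            have := mul_le_mul_of_nonneg_left h1 hDb
            have h3 : (0:ℝ) < u m ^ (be m j - 1) := Real.rpow_pos_of_pos hum _
            nlinarith
        _ = D m j * be m j * u m ^ (p-1) := by linear_combination (D m j * be m j) * h2
    have h1 := hcrit1 m
    have h2 := hcu m
    set S := ∑ j ∈ Finset.univ.filter (· ≠ m), D m j * be m j with hS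
    -- p * B m = 2 * A m + 2 * S
    -- p * B m * u m ^ (p-1) = 2 * A m * u m + 2 * (interaction) ≤ 2*A m*u m + 2*S*u m^(p-1)
    have hpB : p * B m = 2 * A m + 2 * S := by linarith
    have hineq : (2 * A m + 2 * S) * u m ^ (p-1) ≤ 2 * A m * u m + 2 * S * u m ^ (p-1) := by
      rw [← hpB]
      nlinarith [hsum, h2]
    have hA0 := hA m
    nlinarith [hineq, hup, mul_pos hA0 (sub_pos.mpr hup)]
  have bound' : ∀ m : Fin M, (∀ j, u m ≤ u j) → 1 ≤ u m := by
    intro m hm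
    by_contra hlt
    push_neg at hlt
    have hum := hu m
    have hup : u m ^ (p-1) < u m := by
      have := Real.rpow_lt_rpow_of_exponent_gt hum hlt (by linarith : (1:ℝ) < p - 1)
      rwa [Real.rpow_one] at this
    have hsum : (∑ j ∈ Finset.univ.filter (· ≠ m), D m j * be m j) * u m ^ (p-1)
        ≤ ∑ j ∈ Finset.univ.filter (· ≠ m),
            D m j * be m j * u j ^ al m j * u m ^ (be m j - 1) := by
      rw [Finset.sum_mul]
      refine Finset.sum_le_sum fun j hj => ?_
      have hjm : j ≠ m := by simpa using (Finset.mem_filter.mp hj).2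
      have hmj : m ≠ j := hjm.symm
      have h1 : u m ^ al m j ≤ u j ^ al m j :=
        Real.rpow_le_rpow hum.le (hm j) (by linarith [hal m j hmj])
      have h2 : u m ^ al m j * u m ^ (be m j - 1) = u m ^ (p-1) := by
        rw [← Real.rpow_add hum]
        congr 1
        linarith [habp m j hmj]
      have hDb : 0 ≤ D m j * be m j :=
        mul_nonneg (hD m j hmj) (by linarith [hbe m j hmj])
      calc D m j * be m j * u m ^ (p-1)
          = D m j * be m j * u m ^ al m j * u m ^ (be m j - 1) := by
            linear_combination (-(D m j * be m j)) * h2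
        _ ≤ D m j * be m j * u j ^ al m j * u m ^ (be m j - 1) := by
            have := mul_le_mul_of_nonneg_left h1 hDb
            have h3 : (0:ℝ) < u m ^ (be m j - 1) := Real.rpow_pos_of_pos hum _
            nlinarith
    have h1 := hcrit1 m
    have h2 := hcu m
    set S := ∑ j ∈ Finset.univ.filter (· ≠ m), D m j * be m j with hS
    have hpB : p * B m = 2 * A m + 2 * S := by linarith
    have hineq : 2 * A m * u m + 2 * S * u m ^ (p-1) ≤ (2 * A m + 2 * S) * u m ^ (p-1) := by
      rw [← hpB]
      nlinarith [hsum, h2]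
    have hA0 := hA m
    nlinarith [hineq, hup, mul_pos hA0 (sub_pos.mpr hup)]
  obtain ⟨mx, -, hmx⟩ := Finset.exists_max_image Finset.univ u ⟨Classical.arbitrary _, Finset.mem_univ _⟩
  obtain ⟨mn, -, hmn⟩ := Finset.exists_min_image Finset.univ u ⟨Classical.arbitrary _, Finset.mem_univ _⟩
  intro i
  have h1 : u i ≤ 1 := le_trans (hmx i (Finset.mem_univ i))
    (bound mx fun j => hmx j (Finset.mem_univ j))
  have h2 : 1 ≤ u i := le_trans (bound' mn fun j => hmn j (Finset.mem_univ j))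
    (hmn i (Finset.mem_univ i))
  linarith

/-- If `J` has a critical point in `(0,∞)^M`, it is unique and a global maximum. -/
theorem critical_point_unique_global_max
    {M : ℕ} (hM : 1 ≤ M) (p : ℝ) (hp : 2 < p)
    (a b : Fin M → ℝ) (d α β : Fin M → Fin M → ℝ)
    (ha : ∀ i, 0 < a i) (hb : ∀ i, 0 < b i)
    (hd : ∀ i j, i ≠ j → 0 ≤ d i j)
    (hdsymm : ∀ i j, i ≠ j → d i j = d j i)
    (hα : ∀ i j, i ≠ j → 1 < α i j) (hβ : ∀ i j, i ≠ j → 1 < β i j)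
    (hαβp : ∀ i j, i ≠ j → α i j + β i j = p)
    (hsymm : ∀ i j, i ≠ j → α j i = β i j)
    (J : (Fin M → ℝ) → ℝ)
    (hJ : ∀ s : Fin M → ℝ,
      J s = ∑ i, a i * s i ^ (2 : ℝ) - ∑ i, b i * s i ^ p
        + ∑ i, ∑ j ∈ Finset.univ.filter (· ≠ i),
            d i j * s j ^ α i j * s i ^ β i j)
    -- `Crit s` expresses that all partial derivatives of `J` vanish at `s`
    (Crit : (Fin M → ℝ) → Prop)
    (hCrit : ∀ s : Fin M → ℝ, Crit s ↔ ∀ i,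
      2 * a i * s i - p * b i * s i ^ (p - 1)
        + 2 * ∑ j ∈ Finset.univ.filter (· ≠ i),
            d i j * β i j * s j ^ α i j * s i ^ (β i j - 1) = 0)
    (s : Fin M → ℝ) (hs : ∀ i, 0 < s i) (hcs : Crit s) :
    (∀ t : Fin M → ℝ, (∀ i, 0 < t i) → Crit t → t = s) ∧
    (∀ t : Fin M → ℝ, (∀ i, 0 < t i) → J t ≤ J s) := by
  have hp0 : (0:ℝ) < p := by linarith
  -- rescaled coefficients
  set A : Fin M → ℝ := fun i => a i * s i ^ (2:ℝ) with hA_def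
  set B : Fin M → ℝ := fun i => b i * s i ^ p with hB_def
  set D : Fin M → Fin M → ℝ := fun i j => d i j * s j ^ α i j * s i ^ β i j with hD_def
  have hApos : ∀ i, 0 < A i := fun i => mul_pos (ha i) (Real.rpow_pos_of_pos (hs i) _)
  have hDpos : ∀ i j, i ≠ j → 0 ≤ D i j := fun i j hij =>
    mul_nonneg (mul_nonneg (hd i j hij) (Real.rpow_pos_of_pos (hs j) _).le)
      (Real.rpow_pos_of_pos (hs i) _).le
  have hDsymm : ∀ i j, i ≠ j → D i j = D j i := by
    intro i j hij
    simp only [hD_def]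
    rw [hdsymm i j hij, hsymm i j hij, ← hsymm j i hij.symm]
    ring
  have hbesymm : ∀ i j, i ≠ j → β j i = α i j := fun i j hij => (hsymm j i hij.symm).symm
  -- the rescaled critical relation at 1, coming from criticality of s
  have hcrit1 : ∀ i, 2 * A i - p * B i
      + 2 * ∑ j ∈ Finset.univ.filter (· ≠ i), D i j * β i j = 0 := by
    intro i
    have h := (hCrit s).mp hcs i
    have hsi := hs i
    have e1 : A i = a i * s i * s i := by
      simp only [hA_def]
      rw [show (2:ℝ) = (1:ℝ) + 1 by norm_num, Real.rpow_add hsi, Real.rpow_one]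
      ring
    have e2 : B i = b i * s i ^ (p-1) * s i := by
      simp only [hB_def]
      rw [show p = (p-1) + 1 by ring, Real.rpow_add hsi, Real.rpow_one]
      ring_nf
    have e3 : ∑ j ∈ Finset.univ.filter (· ≠ i), D i j * β i j
        = (∑ j ∈ Finset.univ.filter (· ≠ i),
            d i j * β i j * s j ^ α i j * s i ^ (β i j - 1)) * s i := by
      rw [Finset.sum_mul]
      refine Finset.sum_congr rfl fun j hj => ?_
      simp only [hD_def]
      rw [show β i j = (β i j - 1) + 1 by ring, Real.rpow_add hsi, Real.rpow_one]
      ring_nf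
    rw [e1, e2, e3]
    have := congrArg (· * s i) h
    simp only [add_mul, sub_mul, zero_mul] at this
    nlinarith [this]
  -- rewriting J through the rescaled coefficients
  have hJt : ∀ t : Fin M → ℝ, (∀ i, 0 < t i) →
      J t = ∑ i, A i * (t i / s i) ^ (2:ℝ) - ∑ i, B i * (t i / s i) ^ p
        + ∑ i, ∑ j ∈ Finset.univ.filter (· ≠ i),
            D i j * (t j / s j) ^ α i j * (t i / s i) ^ β i j := by
    intro t ht
    rw [hJ t]
    have key : ∀ (i : Fin M) (x : ℝ), s i ^ x * (t i / s i) ^ x = t i ^ x := by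
      intro i x
      rw [← Real.mul_rpow (hs i).le (div_nonneg (ht i).le (hs i).le)]
      congr 1
      rw [mul_comm]
      exact div_mul_cancel₀ (t i) (hs i).ne'
    congr 1
    · congr 1
      · exact Finset.sum_congr rfl fun i _ => by
          simp only [hA_def]; rw [mul_assoc, key]
      · exact Finset.sum_congr rfl fun i _ => by
          simp only [hB_def]; rw [mul_assoc, key]
    · refine Finset.sum_congr rfl fun i _ => Finset.sum_congr rfl fun j _ => ?_
      simp only [hD_def]
      rw [show d i j * s j ^ α i j * s i ^ β i j * (t j / s j) ^ α i j * (t i / s i) ^ β i j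
          = d i j * (s j ^ α i j * (t j / s j) ^ α i j) * (s i ^ β i j * (t i / s i) ^ β i j)
          from by ring, key, key]
      try ring
  have hJs : J s = ∑ i, A i - ∑ i, B i
      + ∑ i, ∑ j ∈ Finset.univ.filter (· ≠ i), D i j := by
    rw [hJ s]
  constructor
  · -- uniqueness
    intro t ht hct
    have hcu : ∀ i, 2 * A i * (t i / s i) - p * B i * (t i / s i) ^ (p - 1)
        + 2 * ∑ j ∈ Finset.univ.filter (· ≠ i),
            D i j * β i j * (t j / s j) ^ α i j * (t i / s i) ^ (β i j - 1) = 0 := by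
      intro i
      have h := (hCrit t).mp hct i
      have hsi := hs i
      have hti := ht i
      have e1 : 2 * A i * (t i / s i) = (2 * a i * t i) * s i := by
        simp only [hA_def]
        rw [show (2:ℝ) = (1:ℝ) + 1 by norm_num, Real.rpow_add hsi, Real.rpow_one]
        field_simp
        try ring
      have e2 : p * B i * (t i / s i) ^ (p-1) = (p * b i * t i ^ (p-1)) * s i := by
        simp only [hB_def]
        rw [Real.div_rpow hti.le hsi.le,
          show p = (p-1) + 1 by ring, Real.rpow_add hsi, Real.rpow_one]
        have h0 : s i ^ (p-1) ≠ 0 := (Real.rpow_pos_of_pos hsi _).ne'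
        field_simp
        try ring
      have e3 : ∑ j ∈ Finset.univ.filter (· ≠ i),
            D i j * β i j * (t j / s j) ^ α i j * (t i / s i) ^ (β i j - 1)
          = (∑ j ∈ Finset.univ.filter (· ≠ i),
              d i j * β i j * t j ^ α i j * t i ^ (β i j - 1)) * s i := by
        rw [Finset.sum_mul]
        refine Finset.sum_congr rfl fun j hj => ?_
        simp only [hD_def]
        rw [Real.div_rpow (ht j).le (hs j).le, Real.div_rpow hti.le hsi.le,
          show β i j = (β i j - 1) + 1 by ring, Real.rpow_add hsi, Real.rpow_one]
        have h0 : s j ^ α i j ≠ 0 := (Real.rpow_pos_of_pos (hs j) _).ne'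
        have h1 : s i ^ (β i j - 1) ≠ 0 := (Real.rpow_pos_of_pos hsi _).ne'
        field_simp
        try ring
      rw [e1, e2, e3]
      have := congrArg (· * s i) h
      simp only [add_mul, sub_mul, zero_mul] at this
      nlinarith [this]
    have hu : ∀ i, t i / s i = 1 :=
      crit1_unique A B D α β hM hp hApos hDpos hα hβ hαβp hcrit1
        (fun i => t i / s i) (fun i => div_pos (ht i) (hs i)) hcu
    funext i
    exact (div_eq_one_iff_eq (hs i).ne').mp (hu i)
  · -- global max
    intro t ht
    rw [hJt t ht, hJs]
    exact crit1_max A B D α β hp hApos hDpos hDsymm hα hβ hαβp hbesymm hcrit1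
      (fun i => t i / s i) (fun i => div_pos (ht i) (hs i))
end

section
/- Let G be a compact group acting continuously on ℝ^N (N ≥ 1) by linear isometries, and suppose that the orbit Gx is infinite for every x ∈ ℝ^N \ {0}. Then for each k ∈ ℕ there exists d_k > 0 such that for every x in the unit sphere S^{N−1} there exist g₁,…,g_k ∈ G with |g_i x − g_j x| ≥ d_k for all i ≠ j. -/
set_option maxHeartbeats 1000000


open scoped RealInnerProductSpace

/-- Orbit-separation lemma: if a compact group acts continuously on `ℝ^N` by
linear isometries and every nonzero point has infinite orbit, then for each `k`
there is `d_k > 0` such that every unit vector has `k` orbit points pairwise at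
distance at least `d_k`. -/
theorem orbit_separation {N : ℕ} (hN : 1 ≤ N)
    (G : Type*) [Group G] [TopologicalSpace G] [IsTopologicalGroup G] [CompactSpace G]
    [MulAction G (EuclideanSpace ℝ (Fin N))]
    [ContinuousSMul G (EuclideanSpace ℝ (Fin N))]
    (hlin : ∀ g : G, IsLinearMap ℝ (fun x : EuclideanSpace ℝ (Fin N) => g • x))
    (hiso : ∀ (g : G) (x y : EuclideanSpace ℝ (Fin N)),
      dist (g • x) (g • y) = dist x y)
    (horb : ∀ x : EuclideanSpace ℝ (Fin N), x ≠ 0 →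
      (MulAction.orbit G x).Infinite) :
    ∀ k : ℕ, ∃ d > (0 : ℝ), ∀ x : EuclideanSpace ℝ (Fin N), ‖x‖ = 1 →
      ∃ g : Fin k → G, ∀ i j, i ≠ j → d ≤ dist (g i • x) (g j • x) := by
  intro k
  rcases Nat.lt_or_ge k 2 with hk | hk
  · -- trivial case k ≤ 1
    refine ⟨1, one_pos, fun x _ => ⟨fun _ => 1, fun i j hij => ?_⟩⟩
    exact absurd (Fin.ext (by omega : i.val = j.val)) hij
  -- main case k ≥ 2
  -- the pairs index set
  set P : Finset (Fin k × Fin k) :=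
    Finset.univ.filter (fun p : Fin k × Fin k => p.1 ≠ p.2) with hP
  have hPne : P.Nonempty := by
    refine ⟨(⟨0, by omega⟩, ⟨1, by omega⟩), ?_⟩
    simp [hP]
  -- local separation at each point of the sphere
  have key : ∀ x : Metric.sphere (0 : EuclideanSpace ℝ (Fin N)) 1, ∃ r > (0:ℝ), ∃ g : Fin k → G,
      ∀ i j, i ≠ j → 3 * r ≤ dist (g i • (x : EuclideanSpace ℝ (Fin N)))
        (g j • (x : EuclideanSpace ℝ (Fin N))) := by
    rintro ⟨x, hxS⟩
    simp only [Subtype.coe_mk]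
    have hx1 : ‖x‖ = 1 := by
      have := Metric.mem_sphere.mp hxS
      rwa [dist_zero_right] at this
    have hx0 : x ≠ 0 := by
      intro h; rw [h, norm_zero] at hx1; norm_num at hx1
    have hinf := horb x hx0
    set f := hinf.natEmbedding with hf
    have hmem : ∀ i : Fin k, (f (i:ℕ) : EuclideanSpace ℝ (Fin N)) ∈ MulAction.orbit G x :=
      fun i => (f (i:ℕ)).2
    choose g hg using fun i => MulAction.mem_orbit_iff.mp (hmem i)
    have hginj : ∀ i j : Fin k, g i • x = g j • x → i = j := by
      intro i j h
      have : f (i:ℕ) = f (j:ℕ) := Subtype.ext (by rw [← hg i, ← hg j, h])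
      exact Fin.ext (f.injective this)
    -- minimum pairwise distance
    set D : ℝ := P.inf' hPne (fun p => dist (g p.1 • x) (g p.2 • x)) with hD
    have hDpos : 0 < D := by
      rw [hD, Finset.lt_inf'_iff]
      intro p hp
      have hne : p.1 ≠ p.2 := (Finset.mem_filter.mp hp).2
      have : g p.1 • x ≠ g p.2 • x := fun h => hne (hginj _ _ h)
      exact dist_pos.mpr this
    refine ⟨D / 3, by linarith, g, fun i j hij => ?_⟩
    have hle : D ≤ dist (g i • x) (g j • x) :=
      Finset.inf'_le (s := P) (fun p => dist (g p.1 • x) (g p.2 • x))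
        (show (i, j) ∈ P from Finset.mem_filter.mpr ⟨Finset.mem_univ (i, j), hij⟩)
    linarith
  choose r hr g hg using key
  -- compactness
  have hS : IsCompact (Metric.sphere (0 : EuclideanSpace ℝ (Fin N)) 1) := isCompact_sphere 0 1
  obtain ⟨t, ht⟩ := hS.elim_finite_subcover
    (fun x : Metric.sphere (0 : EuclideanSpace ℝ (Fin N)) 1 => Metric.ball x (r x))
    (fun x => Metric.isOpen_ball)
    (by
      intro y hy
      exact Set.mem_iUnion.mpr ⟨⟨y, hy⟩, Metric.mem_ball_self (hr ⟨y, hy⟩)⟩)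
  -- the sphere is nonempty
  have hsne : (Metric.sphere (0 : EuclideanSpace ℝ (Fin N)) 1).Nonempty := by
    refine ⟨EuclideanSpace.single ⟨0, by omega⟩ (1:ℝ), ?_⟩
    simp [EuclideanSpace.norm_single]
  have htne : t.Nonempty := by
    obtain ⟨y, hy⟩ := hsne
    have := ht hy
    rw [Set.mem_iUnion₂] at this
    obtain ⟨z, hz, _⟩ := this
    exact ⟨z, hz⟩
  refine ⟨t.inf' htne r, ?_, ?_⟩
  · exact (Finset.lt_inf'_iff htne).mpr fun z _ => hr z
  · intro y hy
    have hyS : y ∈ Metric.sphere (0 : EuclideanSpace ℝ (Fin N)) 1 := by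
      rw [Metric.mem_sphere, dist_zero_right, hy]
    obtain ⟨z, hz, hyz⟩ := Set.mem_iUnion₂.mp (ht hyS)
    refine ⟨g z, fun i j hij => ?_⟩
    have hxy : dist (z : EuclideanSpace ℝ (Fin N)) y < r z := by
      rw [Metric.mem_ball] at hyz
      rwa [dist_comm]
    have h1 : dist (g z i • (z : EuclideanSpace ℝ (Fin N))) (g z i • y) = dist (z : EuclideanSpace ℝ (Fin N)) y := hiso _ _ _
    have h2 : dist (g z j • (z : EuclideanSpace ℝ (Fin N))) (g z j • y) = dist (z : EuclideanSpace ℝ (Fin N)) y := hiso _ _ _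
    have h3 : 3 * r z ≤ dist (g z i • (z : EuclideanSpace ℝ (Fin N))) (g z j • (z : EuclideanSpace ℝ (Fin N))) := hg z i j hij
    have h4 : dist (g z i • (z : EuclideanSpace ℝ (Fin N))) (g z j • (z : EuclideanSpace ℝ (Fin N))) ≤
        dist (g z i • (z : EuclideanSpace ℝ (Fin N))) (g z i • y) + dist (g z i • y) (g z j • y)
          + dist (g z j • y) (g z j • (z : EuclideanSpace ℝ (Fin N))) := dist_triangle4 _ _ _ _
    have h5 : dist (g z j • y) (g z j • (z : EuclideanSpace ℝ (Fin N))) = dist (z : EuclideanSpace ℝ (Fin N)) y := by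
      rw [dist_comm]; exact h2
    have h6 : t.inf' htne r ≤ r z := Finset.inf'_le _ hz
    linarith
end

section
/- Let M ≥ 1, p > 2, and suppose J(s) = Σ_i a_i s_i² − Σ_i b_i s_i^p + Σ_{i≠j} d_ij s_j^{α_ij} s_i^{β_ij} (with a_i, b_i > 0, 0 ≤ d_ij = d_ji, α_ij, β_ij > 1, α_ij + β_ij = p, α_ji = β_ij) has a critical point s⁰ in (0,∞)^M. Then for each ε > 0 there exists δ > 0 such that whenever Σ_i(|ã_i − a_i| + |b̃_i − b_i|) + Σ_{i≠j}|d̃_ij − d_ij| < δ with d̃_ij ≥ 0 symmetric, the perturbed function J̃(s) = Σ_i ã_i s_i² − Σ_i b̃_i s_i^p + Σ_{i≠j} d̃_ij s_j^{α_ij} s_i^{β_ij} has a unique critical point s̃⁰ in (0,∞)^M, which is its global maximum and satisfies |s̃⁰ − s⁰| < ε. -/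
open Finset

lemma sum_comm_offdiag {M : ℕ} (f : Fin M → Fin M → ℝ) :
    ∑ i, ∑ j ∈ Finset.univ.filter (· ≠ i), f i j
      = ∑ i, ∑ j ∈ Finset.univ.filter (· ≠ i), f j i := by
  rw [Finset.sum_comm' (s := Finset.univ) (t := fun x => Finset.univ.filter (· ≠ x))
    (t' := Finset.univ) (s' := fun y => Finset.univ.filter (· ≠ y))
    (fun x y => by simp [ne_comm, eq_comm])]

lemma crit_le {M : ℕ} (hM : 1 ≤ M) {p : ℝ} (hp : 2 < p)
    (α β : Fin M → Fin M → ℝ)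
    (hα : ∀ i j, i ≠ j → 1 < α i j) (hβ : ∀ i j, i ≠ j → 1 < β i j)
    (hαβp : ∀ i j, i ≠ j → α i j + β i j = p)
    (A B : Fin M → ℝ) (D : Fin M → Fin M → ℝ)
    (hA : ∀ i, 0 < A i) (hB : ∀ i, 0 < B i) (hD : ∀ i j, i ≠ j → 0 ≤ D i j)
    (s t : Fin M → ℝ) (hs : ∀ i, 0 < s i) (ht : ∀ i, 0 < t i)
    (hcs : ∀ i, 2 * A i * s i - p * B i * s i ^ (p - 1)
        + 2 * ∑ j ∈ Finset.univ.filter (· ≠ i),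
            D i j * β i j * s j ^ α i j * s i ^ (β i j - 1) = 0)
    (hct : ∀ i, 2 * A i * t i - p * B i * t i ^ (p - 1)
        + 2 * ∑ j ∈ Finset.univ.filter (· ≠ i),
            D i j * β i j * t j ^ α i j * t i ^ (β i j - 1) = 0) :
    ∀ j, t j ≤ s j := by
  obtain ⟨i, -, hi⟩ := Finset.exists_max_image Finset.univ (fun j => t j / s j)
    ⟨⟨0, hM⟩, Finset.mem_univ _⟩
  set γ := t i / s i with hγ
  have hγpos : 0 < γ := div_pos (ht i) (hs i)
  have hts : ∀ j, t j ≤ γ * s j := fun j => (div_le_iff₀ (hs j)).mp (hi j (Finset.mem_univ j))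
  have hti : t i = γ * s i := (div_mul_cancel₀ (t i) (ne_of_gt (hs i))).symm
  have hγle : γ ≤ 1 := by
    have hSt : ∑ j ∈ Finset.univ.filter (· ≠ i),
        D i j * β i j * t j ^ α i j * t i ^ (β i j - 1)
        ≤ γ ^ (p - 1) * ∑ j ∈ Finset.univ.filter (· ≠ i),
            D i j * β i j * s j ^ α i j * s i ^ (β i j - 1) := by
      rw [Finset.mul_sum]
      apply Finset.sum_le_sum
      intro j hj
      have hji : j ≠ i := by simpa using hj
      have hij : i ≠ j := hji.symm
      have hαpos : 0 < α i j := lt_trans one_pos (hα i j hij)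
      have hβ1 : (0:ℝ) < β i j - 1 := by linarith [hβ i j hij]
      have h1 : t j ^ α i j ≤ γ ^ α i j * s j ^ α i j := by
        rw [← Real.mul_rpow (le_of_lt hγpos) (le_of_lt (hs j))]
        exact Real.rpow_le_rpow (le_of_lt (ht j)) (hts j) (le_of_lt hαpos)
      have h2 : t i ^ (β i j - 1) = γ ^ (β i j - 1) * s i ^ (β i j - 1) := by
        rw [hti, Real.mul_rpow (le_of_lt hγpos) (le_of_lt (hs i))]
      have hDβ : 0 ≤ D i j * β i j :=
        mul_nonneg (hD i j hij) (by linarith [hβ i j hij])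
      have key : D i j * β i j * t j ^ α i j * t i ^ (β i j - 1)
          ≤ D i j * β i j * (γ ^ α i j * s j ^ α i j) * (γ ^ (β i j - 1) * s i ^ (β i j - 1)) := by
        rw [h2]
        have ht2 : 0 ≤ γ ^ (β i j - 1) * s i ^ (β i j - 1) :=
          mul_nonneg (Real.rpow_nonneg (le_of_lt hγpos) _) (Real.rpow_nonneg (le_of_lt (hs i)) _)
        have := mul_le_mul_of_nonneg_right (mul_le_mul_of_nonneg_left h1 hDβ) ht2
        linarith
      have hexp : γ ^ α i j * γ ^ (β i j - 1) = γ ^ (p - 1) := by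
        rw [← Real.rpow_add hγpos]
        congr 1
        have := hαβp i j hij
        linarith
      calc D i j * β i j * t j ^ α i j * t i ^ (β i j - 1)
          ≤ D i j * β i j * (γ ^ α i j * s j ^ α i j) * (γ ^ (β i j - 1) * s i ^ (β i j - 1)) := key
        _ = (γ ^ α i j * γ ^ (β i j - 1)) * (D i j * β i j * s j ^ α i j * s i ^ (β i j - 1)) := by
            ring
        _ = γ ^ (p - 1) * (D i j * β i j * s j ^ α i j * s i ^ (β i j - 1)) := by rw [hexp]
    have hpi : t i ^ (p - 1) = γ ^ (p - 1) * s i ^ (p - 1) := by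
      rw [hti, Real.mul_rpow (le_of_lt hγpos) (le_of_lt (hs i))]
    have es := hcs i
    have et := hct i
    set St := ∑ j ∈ Finset.univ.filter (· ≠ i),
        D i j * β i j * t j ^ α i j * t i ^ (β i j - 1) with hStdef
    set Ss := ∑ j ∈ Finset.univ.filter (· ≠ i),
        D i j * β i j * s j ^ α i j * s i ^ (β i j - 1) with hSsdef
    have e1 : p * B i * t i ^ (p - 1) = 2 * A i * t i + 2 * St := by linarith
    have e2 : p * B i * s i ^ (p - 1) = 2 * A i * s i + 2 * Ss := by linarith
    have e4 : γ ^ (p - 1) * (2 * A i * s i) + 2 * (γ ^ (p - 1) * Ss)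
        = 2 * A i * γ * s i + 2 * St := by
      calc γ ^ (p - 1) * (2 * A i * s i) + 2 * (γ ^ (p - 1) * Ss)
          = γ ^ (p - 1) * (p * B i * s i ^ (p - 1)) := by rw [e2]; ring
        _ = p * B i * (γ ^ (p - 1) * s i ^ (p - 1)) := by ring
        _ = p * B i * t i ^ (p - 1) := by rw [← hpi]
        _ = 2 * A i * t i + 2 * St := e1
        _ = 2 * A i * γ * s i + 2 * St := by rw [hti]; ring
    have hkey : γ ^ (p - 1) * (2 * A i * s i) ≤ γ * (2 * A i * s i) := by nlinarith [e4, hSt]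
    have hAs : 0 < 2 * A i * s i := mul_pos (mul_pos two_pos (hA i)) (hs i)
    have hγp : γ ^ (p - 1) ≤ γ := le_of_mul_le_mul_right
      (by calc γ ^ (p-1) * (2 * A i * s i) ≤ γ * (2 * A i * s i) := hkey) hAs
    by_contra h1
    push_neg at h1
    have : γ ^ (1:ℝ) < γ ^ (p - 1) :=
      (Real.rpow_lt_rpow_left_iff h1).mpr (by linarith)
    rw [Real.rpow_one] at this
    linarith
  intro j
  calc t j ≤ γ * s j := hts j
    _ ≤ 1 * s j := mul_le_mul_of_nonneg_right hγle (le_of_lt (hs j))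
    _ = s j := one_mul _

noncomputable def Jfun {M : ℕ} (p : ℝ) (α β : Fin M → Fin M → ℝ) (A B : Fin M → ℝ)
    (D : Fin M → Fin M → ℝ) (t : Fin M → ℝ) : ℝ :=
  ∑ i, A i * t i ^ (2:ℝ) - ∑ i, B i * t i ^ p
    + ∑ i, ∑ j ∈ Finset.univ.filter (· ≠ i), D i j * t j ^ α i j * t i ^ β i j

lemma Jfun_update {M : ℕ} (p : ℝ) (α β : Fin M → Fin M → ℝ) (A B : Fin M → ℝ)
    (D : Fin M → Fin M → ℝ) (t : Fin M → ℝ) (i : Fin M) (x : ℝ) :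
    Jfun p α β A B D (Function.update t i x) =
      ((∑ k ∈ Finset.univ.erase i, A k * t k ^ (2:ℝ)) + A i * x ^ (2:ℝ))
      - ((∑ k ∈ Finset.univ.erase i, B k * t k ^ p) + B i * x ^ p)
      + ((∑ k ∈ Finset.univ.erase i, ∑ j ∈ (Finset.univ.erase k).erase i,
            D k j * t j ^ α k j * t k ^ β k j)
         + (∑ k ∈ Finset.univ.erase i, D k i * x ^ α k i * t k ^ β k i)
         + (∑ j ∈ Finset.univ.erase i, D i j * t j ^ α i j * x ^ β i j)) := by
  classical
  set u := Function.update t i x with hu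
  have huk : ∀ k : Fin M, k ≠ i → u k = t k := fun k hk => Function.update_of_ne hk x t
  have hui : u i = x := Function.update_self i x t
  have h1 : ∑ k, A k * u k ^ (2:ℝ)
      = (∑ k ∈ Finset.univ.erase i, A k * t k ^ (2:ℝ)) + A i * x ^ (2:ℝ) := by
    rw [← Finset.sum_erase_add Finset.univ _ (Finset.mem_univ i), hui]
    congr 1
    exact Finset.sum_congr rfl fun k hk => by rw [huk k (Finset.ne_of_mem_erase hk)]
  have h2 : ∑ k, B k * u k ^ p
      = (∑ k ∈ Finset.univ.erase i, B k * t k ^ p) + B i * x ^ p := by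
    rw [← Finset.sum_erase_add Finset.univ _ (Finset.mem_univ i), hui]
    congr 1
    exact Finset.sum_congr rfl fun k hk => by rw [huk k (Finset.ne_of_mem_erase hk)]
  have h3 : ∑ k, ∑ j ∈ Finset.univ.filter (· ≠ k), D k j * u j ^ α k j * u k ^ β k j
      = (∑ k ∈ Finset.univ.erase i, ∑ j ∈ (Finset.univ.erase k).erase i,
            D k j * t j ^ α k j * t k ^ β k j)
         + (∑ k ∈ Finset.univ.erase i, D k i * x ^ α k i * t k ^ β k i)
         + (∑ j ∈ Finset.univ.erase i, D i j * t j ^ α i j * x ^ β i j) := by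
    simp only [Finset.filter_ne']
    rw [← Finset.sum_erase_add Finset.univ _ (Finset.mem_univ i)]
    have hgi : ∑ j ∈ Finset.univ.erase i, D i j * u j ^ α i j * u i ^ β i j
        = ∑ j ∈ Finset.univ.erase i, D i j * t j ^ α i j * x ^ β i j := by
      rw [hui]
      exact Finset.sum_congr rfl fun j hj => by rw [huk j (Finset.ne_of_mem_erase hj)]
    have hgk : ∀ k ∈ Finset.univ.erase i,
        ∑ j ∈ Finset.univ.erase k, D k j * u j ^ α k j * u k ^ β k j
        = (∑ j ∈ (Finset.univ.erase k).erase i, D k j * t j ^ α k j * t k ^ β k j)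
          + D k i * x ^ α k i * t k ^ β k i := by
      intro k hk
      have hki : k ≠ i := Finset.ne_of_mem_erase hk
      have hik : i ∈ Finset.univ.erase k := Finset.mem_erase.mpr ⟨hki.symm, Finset.mem_univ i⟩
      rw [← Finset.sum_erase_add (Finset.univ.erase k) _ hik, hui, huk k hki]
      congr 1
      refine Finset.sum_congr rfl fun j hj => ?_
      rw [huk j (Finset.ne_of_mem_erase hj)]
    rw [Finset.sum_congr rfl hgk, Finset.sum_add_distrib, hgi]
  simp only [Jfun, h1, h2, h3]

lemma hasDerivAt_Jupdate {M : ℕ} (p : ℝ) (α β : Fin M → Fin M → ℝ) (A B : Fin M → ℝ)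
    (D : Fin M → Fin M → ℝ) (t : Fin M → ℝ) (i : Fin M) (hti : 0 < t i) :
    HasDerivAt (fun x => Jfun p α β A B D (Function.update t i x))
      (A i * (2 * t i ^ ((2:ℝ) - 1)) - B i * (p * t i ^ (p - 1))
        + ((∑ k ∈ Finset.univ.erase i, D k i * (α k i * t i ^ (α k i - 1)) * t k ^ β k i)
           + ∑ j ∈ Finset.univ.erase i, D i j * t j ^ α i j * (β i j * t i ^ (β i j - 1))))
      (t i) := by
  have hne : t i ≠ 0 := ne_of_gt hti
  have d1 : HasDerivAt (fun x : ℝ => A i * x ^ (2:ℝ))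
      (A i * (2 * t i ^ ((2:ℝ) - 1))) (t i) :=
    (Real.hasDerivAt_rpow_const (Or.inl hne)).const_mul (A i)
  have d2 : HasDerivAt (fun x : ℝ => B i * x ^ p) (B i * (p * t i ^ (p - 1))) (t i) :=
    (Real.hasDerivAt_rpow_const (Or.inl hne)).const_mul (B i)
  have d3 : HasDerivAt (fun x : ℝ => ∑ k ∈ Finset.univ.erase i, D k i * x ^ α k i * t k ^ β k i)
      (∑ k ∈ Finset.univ.erase i, D k i * (α k i * t i ^ (α k i - 1)) * t k ^ β k i) (t i) := by
    apply HasDerivAt.fun_sum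
    intro k _
    exact ((Real.hasDerivAt_rpow_const (Or.inl hne)).const_mul (D k i)).mul_const _
  have d4 : HasDerivAt (fun x : ℝ => ∑ j ∈ Finset.univ.erase i, D i j * t j ^ α i j * x ^ β i j)
      (∑ j ∈ Finset.univ.erase i, D i j * t j ^ α i j * (β i j * t i ^ (β i j - 1))) (t i) := by
    apply HasDerivAt.fun_sum
    intro j _
    exact (Real.hasDerivAt_rpow_const (Or.inl hne)).const_mul _
  have dd := (((hasDerivAt_const (t i)
      (∑ k ∈ Finset.univ.erase i, A k * t k ^ (2:ℝ))).add d1).sub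
      ((hasDerivAt_const (t i) (∑ k ∈ Finset.univ.erase i, B k * t k ^ p)).add d2)).add
      ((((hasDerivAt_const (t i) (∑ k ∈ Finset.univ.erase i, ∑ j ∈ (Finset.univ.erase k).erase i,
            D k j * t j ^ α k j * t k ^ β k j)).add d3)).add d4)
  have heq : (fun x => Jfun p α β A B D (Function.update t i x))
      = fun x => ((∑ k ∈ Finset.univ.erase i, A k * t k ^ (2:ℝ)) + A i * x ^ (2:ℝ))
      - ((∑ k ∈ Finset.univ.erase i, B k * t k ^ p) + B i * x ^ p)
      + (((∑ k ∈ Finset.univ.erase i, ∑ j ∈ (Finset.univ.erase k).erase i,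
            D k j * t j ^ α k j * t k ^ β k j)
         + (∑ k ∈ Finset.univ.erase i, D k i * x ^ α k i * t k ^ β k i))
         + (∑ j ∈ Finset.univ.erase i, D i j * t j ^ α i j * x ^ β i j)) := by
    funext x
    rw [Jfun_update]
  rw [heq]
  simp only [zero_add] at dd
  exact dd

lemma localmax_crit {M : ℕ} (p : ℝ) (α β : Fin M → Fin M → ℝ) (A B : Fin M → ℝ)
    (D : Fin M → Fin M → ℝ)
    (hDsymm : ∀ i j, i ≠ j → D i j = D j i)
    (hsymm : ∀ i j, i ≠ j → α j i = β i j)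
    (t : Fin M → ℝ) (i : Fin M) (hti : 0 < t i)
    (hloc : IsLocalMax (fun x => Jfun p α β A B D (Function.update t i x)) (t i)) :
    2 * A i * t i - p * B i * t i ^ (p - 1)
      + 2 * ∑ j ∈ Finset.univ.filter (· ≠ i),
          D i j * β i j * t j ^ α i j * t i ^ (β i j - 1) = 0 := by
  have h0 := hloc.hasDerivAt_eq_zero (hasDerivAt_Jupdate p α β A B D t i hti)
  have e1 : A i * (2 * t i ^ ((2:ℝ) - 1)) = 2 * A i * t i := by
    rw [show ((2:ℝ) - 1) = 1 by norm_num, Real.rpow_one]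
    ring
  have e2 : ∑ k ∈ Finset.univ.erase i, D k i * (α k i * t i ^ (α k i - 1)) * t k ^ β k i
      = ∑ j ∈ Finset.univ.erase i, D i j * β i j * t j ^ α i j * t i ^ (β i j - 1) := by
    refine Finset.sum_congr rfl fun k hk => ?_
    have hki : k ≠ i := Finset.ne_of_mem_erase hk
    rw [hDsymm k i hki, hsymm i k hki.symm, hsymm k i hki]
    ring
  have e3 : ∑ j ∈ Finset.univ.erase i, D i j * t j ^ α i j * (β i j * t i ^ (β i j - 1))
      = ∑ j ∈ Finset.univ.erase i, D i j * β i j * t j ^ α i j * t i ^ (β i j - 1) := by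
    refine Finset.sum_congr rfl fun j _ => ?_
    ring
  rw [e1, e2, e3] at h0
  simp only [Finset.filter_ne']
  linarith

lemma cont_rpow_const {c : ℝ} (hc : 0 < c) : Continuous fun x : ℝ => x ^ c :=
  continuous_iff_continuousAt.mpr fun x => Real.continuousAt_rpow_const x c (Or.inr hc.le)

-- 1-D coercive function facts
lemma hfun_facts {C₁ C₂ p : ℝ} (hC₁ : 0 ≤ C₁) (hC₂ : 0 < C₂) (hp : 2 < p) :
    ∃ X : ℝ, 1 ≤ X ∧
      (∀ x : ℝ, 0 ≤ x → C₁ * x ^ (2:ℝ) - C₂ * x ^ p ≤ C₁ * X ^ (2:ℝ)) ∧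
      (∀ x : ℝ, X ≤ x → C₁ * x ^ (2:ℝ) - C₂ * x ^ p ≤ - x ^ (2:ℝ)) := by
  have hp2 : (0:ℝ) < p - 2 := by linarith
  set c : ℝ := ((C₁ + 1) / C₂) ^ (p - 2)⁻¹ with hc
  set X : ℝ := max 1 c with hX
  have hX1 : (1:ℝ) ≤ X := le_max_left _ _
  have hX0 : (0:ℝ) < X := lt_of_lt_of_le one_pos hX1
  have key : ∀ x : ℝ, X ≤ x → (C₁ + 1) * x ^ (2:ℝ) ≤ C₂ * x ^ p := by
    intro x hx
    have hx0 : 0 < x := lt_of_lt_of_le hX0 hx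
    have h1 : x ^ p = x ^ (2:ℝ) * x ^ (p - 2) := by
      rw [← Real.rpow_add hx0]; norm_num
    have h2 : (C₁ + 1) / C₂ ≤ x ^ (p - 2) := by
      have hcle : c ≤ x := le_trans (le_max_right _ _) hx
      have := Real.rpow_le_rpow (by positivity) hcle hp2.le
      rwa [hc, Real.rpow_inv_rpow (by positivity) (ne_of_gt hp2)] at this
    have hx2 : (0:ℝ) ≤ x ^ (2:ℝ) := Real.rpow_nonneg hx0.le _
    calc (C₁ + 1) * x ^ (2:ℝ) = ((C₁ + 1) / C₂) * x ^ (2:ℝ) * C₂ := by field_simp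
      _ ≤ x ^ (p - 2) * x ^ (2:ℝ) * C₂ := by
          apply mul_le_mul_of_nonneg_right _ hC₂.le
          exact mul_le_mul_of_nonneg_right h2 hx2
      _ = C₂ * x ^ p := by rw [h1]; ring
  refine ⟨X, hX1, ?_, ?_⟩
  · intro x hx
    rcases le_or_gt x X with h | h
    · have h1 : C₁ * x ^ (2:ℝ) ≤ C₁ * X ^ (2:ℝ) :=
        mul_le_mul_of_nonneg_left (Real.rpow_le_rpow hx h (by norm_num)) hC₁
      have h2 : 0 ≤ C₂ * x ^ p := mul_nonneg hC₂.le (Real.rpow_nonneg hx _)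
      linarith
    · have h1 := key x h.le
      have h2 : (0:ℝ) ≤ x ^ (2:ℝ) := Real.rpow_nonneg hx _
      have h3 : (0:ℝ) ≤ C₁ * X ^ (2:ℝ) :=
        mul_nonneg hC₁ (Real.rpow_nonneg hX0.le _)
      linarith
  · intro x hx
    have hx0 : (0:ℝ) ≤ x := le_trans hX0.le hx
    have h1 := key x hx
    linarith

lemma Jfun_coercive {M : ℕ} {p : ℝ} (hp : 2 < p) (α β : Fin M → Fin M → ℝ)
    (hα : ∀ i j, i ≠ j → 1 < α i j) (hβ : ∀ i j, i ≠ j → 1 < β i j)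
    (hαβp : ∀ i j, i ≠ j → α i j + β i j = p)
    (hsymm : ∀ i j, i ≠ j → α j i = β i j)
    (A B : Fin M → ℝ) (D : Fin M → Fin M → ℝ)
    (hD : ∀ i j, i ≠ j → 0 ≤ D i j) (hDsymm : ∀ i j, i ≠ j → D i j = D j i)
    (s₀ : Fin M → ℝ) (hs₀ : ∀ i, 0 < s₀ i) (C₁ C₂ : ℝ)
    (hC₁ : ∀ i, A i ≤ C₁)
    (hC₂ : ∀ i, C₂ ≤ B i - (2 / (p * s₀ i ^ p)) *
        ∑ j ∈ Finset.univ.filter (· ≠ i), D i j * β i j * s₀ j ^ α i j * s₀ i ^ β i j)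
    (t : Fin M → ℝ) (ht : ∀ i, 0 ≤ t i) :
    Jfun p α β A B D t ≤ ∑ i, (C₁ * t i ^ (2:ℝ) - C₂ * t i ^ p) := by
  have hp0 : (0:ℝ) < p := by linarith
  set x : Fin M → ℝ := fun i => t i / s₀ i with hx
  have hx0 : ∀ i, 0 ≤ x i := fun i => div_nonneg (ht i) (hs₀ i).le
  have htx : ∀ i, t i = s₀ i * x i := fun i => by
    have h := (hs₀ i).ne'
    simp only [hx]
    field_simp
  -- termwise Young inequality
  have key : ∀ i j, j ≠ i →
      D i j * t j ^ α i j * t i ^ β i j ≤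
        (D i j * β i j * s₀ j ^ α i j * s₀ i ^ β i j) * x i ^ p / p
        + (D i j * α i j * s₀ j ^ α i j * s₀ i ^ β i j) * x j ^ p / p := by
    intro i j hji
    have hij : i ≠ j := hji.symm
    have hαp : 0 < α i j := lt_trans one_pos (hα i j hij)
    have hβp : 0 < β i j := lt_trans one_pos (hβ i j hij)
    have hsum := hαβp i j hij
    have e1 : t j ^ α i j = s₀ j ^ α i j * x j ^ α i j := by
      rw [htx j, Real.mul_rpow (hs₀ j).le (hx0 j)]
    have e2 : t i ^ β i j = s₀ i ^ β i j * x i ^ β i j := by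
      rw [htx i, Real.mul_rpow (hs₀ i).le (hx0 i)]
    have young : x j ^ α i j * x i ^ β i j ≤
        (α i j / p) * x j ^ p + (β i j / p) * x i ^ p := by
      have h1 : x j ^ α i j = (x j ^ p) ^ (α i j / p) := by
        rw [← Real.rpow_mul (hx0 j)]
        congr 1
        field_simp
      have h2 : x i ^ β i j = (x i ^ p) ^ (β i j / p) := by
        rw [← Real.rpow_mul (hx0 i)]
        congr 1
        field_simp
      rw [h1, h2]
      exact Real.geom_mean_le_arith_mean2_weighted
        (div_nonneg hαp.le hp0.le) (div_nonneg hβp.le hp0.le)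
        (Real.rpow_nonneg (hx0 j) _) (Real.rpow_nonneg (hx0 i) _)
        (by field_simp; linarith)
    have hDnn : 0 ≤ D i j := hD i j hij
    have hs₀nn : 0 ≤ s₀ j ^ α i j * s₀ i ^ β i j :=
      mul_nonneg (Real.rpow_nonneg (hs₀ j).le _) (Real.rpow_nonneg (hs₀ i).le _)
    calc D i j * t j ^ α i j * t i ^ β i j
        = (D i j * (s₀ j ^ α i j * s₀ i ^ β i j)) * (x j ^ α i j * x i ^ β i j) := by
          rw [e1, e2]; ring
      _ ≤ (D i j * (s₀ j ^ α i j * s₀ i ^ β i j)) *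
            ((α i j / p) * x j ^ p + (β i j / p) * x i ^ p) :=
          mul_le_mul_of_nonneg_left young (mul_nonneg hDnn hs₀nn)
      _ = (D i j * β i j * s₀ j ^ α i j * s₀ i ^ β i j) * x i ^ p / p
          + (D i j * α i j * s₀ j ^ α i j * s₀ i ^ β i j) * x j ^ p / p := by
          field_simp
          ring
  -- bound the interaction double sum
  have hI : ∑ i, ∑ j ∈ Finset.univ.filter (· ≠ i), D i j * t j ^ α i j * t i ^ β i j
      ≤ ∑ i, (2 / (p * s₀ i ^ p)) *
          (∑ j ∈ Finset.univ.filter (· ≠ i),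
            D i j * β i j * s₀ j ^ α i j * s₀ i ^ β i j) * t i ^ p := by
    have step1 : ∑ i, ∑ j ∈ Finset.univ.filter (· ≠ i), D i j * t j ^ α i j * t i ^ β i j
        ≤ ∑ i, ∑ j ∈ Finset.univ.filter (· ≠ i),
            ((D i j * β i j * s₀ j ^ α i j * s₀ i ^ β i j) * x i ^ p / p
              + (D i j * α i j * s₀ j ^ α i j * s₀ i ^ β i j) * x j ^ p / p) := by
      apply Finset.sum_le_sum
      intro i _
      apply Finset.sum_le_sum
      intro j hj
      exact key i j (by simpa using hj)
    have step2 : ∑ i, ∑ j ∈ Finset.univ.filter (· ≠ i),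
          (D i j * α i j * s₀ j ^ α i j * s₀ i ^ β i j) * x j ^ p / p
        = ∑ i, ∑ j ∈ Finset.univ.filter (· ≠ i),
          (D i j * β i j * s₀ j ^ α i j * s₀ i ^ β i j) * x i ^ p / p := by
      rw [sum_comm_offdiag (fun i j => (D i j * α i j * s₀ j ^ α i j * s₀ i ^ β i j) * x j ^ p / p)]
      apply Finset.sum_congr rfl
      intro i _
      apply Finset.sum_congr rfl
      intro j hj
      have hji : j ≠ i := by simpa using hj
      have hij : i ≠ j := hji.symm
      rw [hDsymm j i hji, hsymm i j hij, hsymm j i hji]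
      ring
    have step3 : ∀ i, ∑ j ∈ Finset.univ.filter (· ≠ i),
          ((D i j * β i j * s₀ j ^ α i j * s₀ i ^ β i j) * x i ^ p / p
            + (D i j * β i j * s₀ j ^ α i j * s₀ i ^ β i j) * x i ^ p / p)
        = (2 / (p * s₀ i ^ p)) *
          (∑ j ∈ Finset.univ.filter (· ≠ i),
            D i j * β i j * s₀ j ^ α i j * s₀ i ^ β i j) * t i ^ p := by
      intro i
      have hxp : x i ^ p = t i ^ p / s₀ i ^ p := by
        simp only [hx]
        exact Real.div_rpow (ht i) (hs₀ i).le p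
      have hs₀p : (0:ℝ) < s₀ i ^ p := Real.rpow_pos_of_pos (hs₀ i) _
      have hs₀ne : s₀ i ^ p ≠ 0 := ne_of_gt hs₀p
      have hpne : p ≠ 0 := ne_of_gt hp0
      calc ∑ j ∈ Finset.univ.filter (· ≠ i),
            ((D i j * β i j * s₀ j ^ α i j * s₀ i ^ β i j) * x i ^ p / p
              + (D i j * β i j * s₀ j ^ α i j * s₀ i ^ β i j) * x i ^ p / p)
          = ∑ j ∈ Finset.univ.filter (· ≠ i),
              (D i j * β i j * s₀ j ^ α i j * s₀ i ^ β i j) * (2 * x i ^ p / p) := by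
            apply Finset.sum_congr rfl
            intro j _
            ring
        _ = (∑ j ∈ Finset.univ.filter (· ≠ i),
              D i j * β i j * s₀ j ^ α i j * s₀ i ^ β i j) * (2 * x i ^ p / p) := by
            rw [← Finset.sum_mul]
        _ = (2 / (p * s₀ i ^ p)) *
            (∑ j ∈ Finset.univ.filter (· ≠ i),
              D i j * β i j * s₀ j ^ α i j * s₀ i ^ β i j) * t i ^ p := by
            rw [hxp]
            field_simp
    calc ∑ i, ∑ j ∈ Finset.univ.filter (· ≠ i), D i j * t j ^ α i j * t i ^ β i j
        ≤ ∑ i, ∑ j ∈ Finset.univ.filter (· ≠ i),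
            ((D i j * β i j * s₀ j ^ α i j * s₀ i ^ β i j) * x i ^ p / p
              + (D i j * α i j * s₀ j ^ α i j * s₀ i ^ β i j) * x j ^ p / p) := step1
      _ = (∑ i, ∑ j ∈ Finset.univ.filter (· ≠ i),
            (D i j * β i j * s₀ j ^ α i j * s₀ i ^ β i j) * x i ^ p / p)
          + ∑ i, ∑ j ∈ Finset.univ.filter (· ≠ i),
            (D i j * α i j * s₀ j ^ α i j * s₀ i ^ β i j) * x j ^ p / p := by
          simp only [Finset.sum_add_distrib]
      _ = ∑ i, ∑ j ∈ Finset.univ.filter (· ≠ i),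
            ((D i j * β i j * s₀ j ^ α i j * s₀ i ^ β i j) * x i ^ p / p
              + (D i j * β i j * s₀ j ^ α i j * s₀ i ^ β i j) * x i ^ p / p) := by
          rw [step2]
          simp only [Finset.sum_add_distrib]
      _ = ∑ i, (2 / (p * s₀ i ^ p)) *
            (∑ j ∈ Finset.univ.filter (· ≠ i),
              D i j * β i j * s₀ j ^ α i j * s₀ i ^ β i j) * t i ^ p := by
          exact Finset.sum_congr rfl fun i _ => step3 i
  -- conclude
  have hfinal : ∀ i, A i * t i ^ (2:ℝ) - B i * t i ^ p
      + (2 / (p * s₀ i ^ p)) *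
        (∑ j ∈ Finset.univ.filter (· ≠ i),
          D i j * β i j * s₀ j ^ α i j * s₀ i ^ β i j) * t i ^ p
      ≤ C₁ * t i ^ (2:ℝ) - C₂ * t i ^ p := by
    intro i
    have h2nn : (0:ℝ) ≤ t i ^ (2:ℝ) := Real.rpow_nonneg (ht i) _
    have hpnn : (0:ℝ) ≤ t i ^ p := Real.rpow_nonneg (ht i) _
    have h1 : A i * t i ^ (2:ℝ) ≤ C₁ * t i ^ (2:ℝ) :=
      mul_le_mul_of_nonneg_right (hC₁ i) h2nn
    have h2 := mul_le_mul_of_nonneg_right (hC₂ i) hpnn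
    nlinarith [h2]
  calc Jfun p α β A B D t
      ≤ ∑ i, A i * t i ^ (2:ℝ) - ∑ i, B i * t i ^ p
        + ∑ i, (2 / (p * s₀ i ^ p)) *
            (∑ j ∈ Finset.univ.filter (· ≠ i),
              D i j * β i j * s₀ j ^ α i j * s₀ i ^ β i j) * t i ^ p := by
        unfold Jfun
        linarith [hI]
    _ = ∑ i, (A i * t i ^ (2:ℝ) - B i * t i ^ p
        + (2 / (p * s₀ i ^ p)) *
            (∑ j ∈ Finset.univ.filter (· ≠ i),
              D i j * β i j * s₀ j ^ α i j * s₀ i ^ β i j) * t i ^ p) := by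
        simp only [Finset.sum_add_distrib, Finset.sum_sub_distrib]
    _ ≤ ∑ i, (C₁ * t i ^ (2:ℝ) - C₂ * t i ^ p) :=
        Finset.sum_le_sum fun i _ => hfinal i

lemma continuous_Jfun {M : ℕ} {p : ℝ} (hp : 0 < p) (α β : Fin M → Fin M → ℝ)
    (hα : ∀ i j, i ≠ j → 0 < α i j) (hβ : ∀ i j, i ≠ j → 0 < β i j)
    (A B : Fin M → ℝ) (D : Fin M → Fin M → ℝ) :
    Continuous (Jfun p α β A B D) := by
  unfold Jfun
  apply Continuous.add
  · apply Continuous.sub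
    · exact continuous_finset_sum _ fun i _ =>
        continuous_const.mul ((cont_rpow_const (by norm_num : (0:ℝ) < 2)).comp
          (continuous_apply i))
    · exact continuous_finset_sum _ fun i _ =>
        continuous_const.mul ((cont_rpow_const hp).comp (continuous_apply i))
  · apply continuous_finset_sum
    intro i _
    apply continuous_finset_sum
    intro j hj
    have hji : j ≠ i := by simpa using hj
    exact (continuous_const.mul ((cont_rpow_const (hα i j hji.symm)).comp
      (continuous_apply j))).mul ((cont_rpow_const (hβ i j hji.symm)).comp (continuous_apply i))

lemma maxOn_pos {M : ℕ} {p : ℝ} (hp : 2 < p) (α β : Fin M → Fin M → ℝ)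
    (hα : ∀ i j, i ≠ j → 1 < α i j) (hβ : ∀ i j, i ≠ j → 1 < β i j)
    (A B : Fin M → ℝ) (D : Fin M → Fin M → ℝ)
    (hA : ∀ i, 0 < A i) (hB : ∀ i, 0 < B i) (hD : ∀ i j, i ≠ j → 0 ≤ D i j)
    {R : ℝ} (hR : 0 < R) (m : Fin M → ℝ)
    (hm : m ∈ Set.Icc (0 : Fin M → ℝ) (fun _ => R))
    (hmax : IsMaxOn (Jfun p α β A B D) (Set.Icc (0 : Fin M → ℝ) (fun _ => R)) m) :
    ∀ i, 0 < m i := by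
  intro i
  have h0 : (0:ℝ) ≤ m i := hm.1 i
  rcases h0.lt_or_eq with h | h
  · exact h
  exfalso
  have hp2 : (0:ℝ) < p - 2 := by linarith
  have hAB : (0:ℝ) < A i / B i := div_pos (hA i) (hB i)
  set c : ℝ := (A i / B i) ^ (p - 2)⁻¹ with hcdef
  have hc : 0 < c := Real.rpow_pos_of_pos hAB _
  set η : ℝ := min R (min 1 (c / 2)) with hηdef
  have hη0 : 0 < η := lt_min hR (lt_min one_pos (by positivity))
  have hηR : η ≤ R := min_le_left _ _
  have hηc : η < c := by
    have : η ≤ c / 2 := (min_le_right _ _).trans (min_le_right _ _)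
    linarith
  have hpow : η ^ (p - 2) < A i / B i := by
    have h1 := Real.rpow_lt_rpow hη0.le hηc hp2
    rwa [hcdef, Real.rpow_inv_rpow hAB.le (ne_of_gt hp2)] at h1
  have hkey : B i * η ^ p < A i * η ^ (2:ℝ) := by
    have hsplit : η ^ p = η ^ (2:ℝ) * η ^ (p - 2) := by
      rw [← Real.rpow_add hη0]; norm_num
    have h2 : 0 < η ^ (2:ℝ) := Real.rpow_pos_of_pos hη0 _
    rw [hsplit]
    calc B i * (η ^ (2:ℝ) * η ^ (p - 2)) = (η ^ (p - 2) * B i) * η ^ (2:ℝ) := by ring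
      _ < (A i / B i * B i) * η ^ (2:ℝ) :=
          mul_lt_mul_of_pos_right (mul_lt_mul_of_pos_right hpow (hB i)) h2
      _ = A i * η ^ (2:ℝ) := by field_simp [(hB i).ne']
  have hmem : Function.update m i η ∈ Set.Icc (0 : Fin M → ℝ) (fun _ => R) := by
    constructor <;> intro k <;> by_cases hk : k = i
    · subst hk; simpa using hη0.le
    · simpa [Function.update_of_ne hk] using hm.1 k
    · subst hk; simpa using hηR
    · simpa [Function.update_of_ne hk] using hm.2 k
  have hle := hmax hmem
  have hJm : Jfun p α β A B D m = Jfun p α β A B D (Function.update m i 0) := by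
    rw [h, Function.update_eq_self]
  simp only [Set.mem_setOf_eq] at hle
  rw [hJm, Jfun_update, Jfun_update] at hle
  have E0a : (0:ℝ) ^ (2:ℝ) = 0 := Real.zero_rpow two_ne_zero
  have E0b : (0:ℝ) ^ p = 0 := Real.zero_rpow (by positivity)
  have S1 : ∑ k ∈ Finset.univ.erase i, D k i * (0:ℝ) ^ α k i * m k ^ β k i = 0 :=
    Finset.sum_eq_zero fun k hk => by
      rw [Real.zero_rpow (ne_of_gt (lt_trans one_pos (hα k i (Finset.ne_of_mem_erase hk))))]
      ring
  have S2 : ∑ j ∈ Finset.univ.erase i, D i j * m j ^ α i j * (0:ℝ) ^ β i j = 0 :=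
    Finset.sum_eq_zero fun j hj => by
      rw [Real.zero_rpow (ne_of_gt (lt_trans one_pos
        (hβ i j (Finset.ne_of_mem_erase hj).symm)))]
      ring
  rw [E0a, E0b, S1, S2] at hle
  have N1 : 0 ≤ ∑ k ∈ Finset.univ.erase i, D k i * η ^ α k i * m k ^ β k i :=
    Finset.sum_nonneg fun k hk => by
      have hki := Finset.ne_of_mem_erase hk
      exact mul_nonneg (mul_nonneg (hD k i hki) (Real.rpow_nonneg hη0.le _))
        (Real.rpow_nonneg (hm.1 k) _)
  have N2 : 0 ≤ ∑ j ∈ Finset.univ.erase i, D i j * m j ^ α i j * η ^ β i j :=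
    Finset.sum_nonneg fun j hj => by
      have hji := Finset.ne_of_mem_erase hj
      exact mul_nonneg (mul_nonneg (hD i j hji.symm) (Real.rpow_nonneg (hm.1 j) _))
        (Real.rpow_nonneg hη0.le _)
  linarith

lemma isLocalMax_coord {M : ℕ} {p : ℝ} (α β : Fin M → Fin M → ℝ)
    (A B : Fin M → ℝ) (D : Fin M → Fin M → ℝ) {R : ℝ}
    (m : Fin M → ℝ) (hm : m ∈ Set.Icc (0 : Fin M → ℝ) (fun _ => R))
    (hmax : IsMaxOn (Jfun p α β A B D) (Set.Icc (0 : Fin M → ℝ) (fun _ => R)) m)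
    (i : Fin M) (h0 : 0 < m i) (h1 : m i < R) :
    IsLocalMax (fun x => Jfun p α β A B D (Function.update m i x)) (m i) := by
  have hIoo : Set.Ioo (0:ℝ) R ∈ nhds (m i) := Ioo_mem_nhds h0 h1
  filter_upwards [hIoo] with x hx
  have hmem : Function.update m i x ∈ Set.Icc (0 : Fin M → ℝ) (fun _ => R) := by
    constructor <;> intro k <;> by_cases hk : k = i
    · subst hk; simpa using hx.1.le
    · simpa [Function.update_of_ne hk] using hm.1 k
    · subst hk; simpa using hx.2.le
    · simpa [Function.update_of_ne hk] using hm.2 k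
  have := hmax hmem
  simpa [Function.update_eq_self] using this

lemma exists_crit_max {M : ℕ} {p : ℝ} (hp : 2 < p) (α β : Fin M → Fin M → ℝ)
    (hα : ∀ i j, i ≠ j → 1 < α i j) (hβ : ∀ i j, i ≠ j → 1 < β i j)
    (hsymm : ∀ i j, i ≠ j → α j i = β i j)
    (A B : Fin M → ℝ) (D : Fin M → Fin M → ℝ)
    (hA : ∀ i, 0 < A i) (hB : ∀ i, 0 < B i) (hD : ∀ i j, i ≠ j → 0 ≤ D i j)
    (hDsymm : ∀ i j, i ≠ j → D i j = D j i)
    {R : ℝ} (hR0 : 0 < R)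
    (w : Fin M → ℝ) (hw : w ∈ Set.Icc (0 : Fin M → ℝ) (fun _ => R))
    (hfar : ∀ t ∈ Set.Icc (0 : Fin M → ℝ) (fun _ => R), (∃ i, t i = R) →
      Jfun p α β A B D t < Jfun p α β A B D w) :
    ∃ m, m ∈ Set.Icc (0 : Fin M → ℝ) (fun _ => R) ∧
      IsMaxOn (Jfun p α β A B D) (Set.Icc (0 : Fin M → ℝ) (fun _ => R)) m ∧
      (∀ i, 0 < m i) ∧ (∀ i, m i < R) ∧
      ∀ i, 2 * A i * m i - p * B i * m i ^ (p - 1)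
        + 2 * ∑ j ∈ Finset.univ.filter (· ≠ i),
            D i j * β i j * m j ^ α i j * m i ^ (β i j - 1) = 0 := by
  have hp0 : (0:ℝ) < p := by linarith
  have hcont := (continuous_Jfun hp0 α β
    (fun i j hij => lt_trans one_pos (hα i j hij))
    (fun i j hij => lt_trans one_pos (hβ i j hij)) A B D).continuousOn
    (s := Set.Icc (0 : Fin M → ℝ) (fun _ => R))
  obtain ⟨m, hmK, hmax⟩ := isCompact_Icc.exists_isMaxOn ⟨w, hw⟩ hcont
  have hpos : ∀ i, 0 < m i := maxOn_pos hp α β hα hβ A B D hA hB hD hR0 m hmK hmax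
  have hlt : ∀ i, m i < R := by
    intro i
    rcases (hmK.2 i).lt_or_eq with h | h
    · exact h
    · exfalso
      have h1 := hfar m hmK ⟨i, h⟩
      have h2 := hmax hw
      simp only [Set.mem_setOf_eq] at h2
      linarith
  refine ⟨m, hmK, hmax, hpos, hlt, fun i => ?_⟩
  exact localmax_crit p α β A B D hDsymm hsymm m i (hpos i)
    (isLocalMax_coord α β A B D m hmK hmax i (hpos i) (hlt i))

lemma Jfun_pert {M : ℕ} {p : ℝ} (hp : 2 < p) (α β : Fin M → Fin M → ℝ)
    (hα : ∀ i j, i ≠ j → 1 < α i j) (hβ : ∀ i j, i ≠ j → 1 < β i j)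
    (hαβp : ∀ i j, i ≠ j → α i j + β i j = p)
    (A B A' B' : Fin M → ℝ) (D D' : Fin M → Fin M → ℝ)
    {R : ℝ} (hR1 : 1 ≤ R) (t : Fin M → ℝ) (ht0 : ∀ i, 0 ≤ t i) (htR : ∀ i, t i ≤ R) :
    |Jfun p α β A' B' D' t - Jfun p α β A B D t| ≤
      ((∑ i, (|A' i - A i| + |B' i - B i|))
        + ∑ i, ∑ j ∈ Finset.univ.filter (· ≠ i), |D' i j - D i j|) * R ^ p := by
  have hR0 : (0:ℝ) < R := lt_of_lt_of_le one_pos hR1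
  have hRp : (0:ℝ) ≤ R ^ p := Real.rpow_nonneg hR0.le _
  have ht2 : ∀ i, t i ^ (2:ℝ) ≤ R ^ p := by
    intro i
    calc t i ^ (2:ℝ) ≤ R ^ (2:ℝ) := Real.rpow_le_rpow (ht0 i) (htR i) (by norm_num)
      _ ≤ R ^ p := Real.rpow_le_rpow_of_exponent_le hR1 (by linarith)
  have htp : ∀ i, t i ^ p ≤ R ^ p :=
    fun i => Real.rpow_le_rpow (ht0 i) (htR i) (by linarith)
  have htab : ∀ i j, i ≠ j → t j ^ α i j * t i ^ β i j ≤ R ^ p := by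
    intro i j hij
    have h1 : t j ^ α i j ≤ R ^ α i j :=
      Real.rpow_le_rpow (ht0 j) (htR j) (by linarith [hα i j hij])
    have h2 : t i ^ β i j ≤ R ^ β i j :=
      Real.rpow_le_rpow (ht0 i) (htR i) (by linarith [hβ i j hij])
    calc t j ^ α i j * t i ^ β i j ≤ R ^ α i j * R ^ β i j := by
          apply mul_le_mul h1 h2 (Real.rpow_nonneg (ht0 i) _) (Real.rpow_nonneg hR0.le _)
      _ = R ^ p := by rw [← Real.rpow_add hR0, hαβp i j hij]
  have e : Jfun p α β A' B' D' t - Jfun p α β A B D t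
      = ∑ i, (A' i - A i) * t i ^ (2:ℝ) - ∑ i, (B' i - B i) * t i ^ p
        + ∑ i, ∑ j ∈ Finset.univ.filter (· ≠ i), (D' i j - D i j) * (t j ^ α i j * t i ^ β i j) := by
    unfold Jfun
    have eA : (∑ i, (A' i - A i) * t i ^ (2:ℝ))
        = ∑ i, A' i * t i ^ (2:ℝ) - ∑ i, A i * t i ^ (2:ℝ) := by
      rw [← Finset.sum_sub_distrib]
      exact Finset.sum_congr rfl fun i _ => by ring
    have eB : (∑ i, (B' i - B i) * t i ^ p) = ∑ i, B' i * t i ^ p - ∑ i, B i * t i ^ p := by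
      rw [← Finset.sum_sub_distrib]
      exact Finset.sum_congr rfl fun i _ => by ring
    have eD : (∑ i, ∑ j ∈ Finset.univ.filter (· ≠ i),
          (D' i j - D i j) * (t j ^ α i j * t i ^ β i j))
        = (∑ i, ∑ j ∈ Finset.univ.filter (· ≠ i), D' i j * t j ^ α i j * t i ^ β i j)
          - ∑ i, ∑ j ∈ Finset.univ.filter (· ≠ i), D i j * t j ^ α i j * t i ^ β i j := by
      rw [← Finset.sum_sub_distrib]
      refine Finset.sum_congr rfl fun i _ => ?_
      rw [← Finset.sum_sub_distrib]
      exact Finset.sum_congr rfl fun j _ => by ring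
    rw [eA, eB, eD]
    ring
  rw [e]
  have b1 : |∑ i, (A' i - A i) * t i ^ (2:ℝ)| ≤ ∑ i, |A' i - A i| * R ^ p := by
    refine le_trans (Finset.abs_sum_le_sum_abs _ _) (Finset.sum_le_sum fun i _ => ?_)
    rw [abs_mul, abs_of_nonneg (Real.rpow_nonneg (ht0 i) _)]
    exact mul_le_mul_of_nonneg_left (ht2 i) (abs_nonneg _)
  have b2 : |∑ i, (B' i - B i) * t i ^ p| ≤ ∑ i, |B' i - B i| * R ^ p := by
    refine le_trans (Finset.abs_sum_le_sum_abs _ _) (Finset.sum_le_sum fun i _ => ?_)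
    rw [abs_mul, abs_of_nonneg (Real.rpow_nonneg (ht0 i) _)]
    exact mul_le_mul_of_nonneg_left (htp i) (abs_nonneg _)
  have b3 : |∑ i, ∑ j ∈ Finset.univ.filter (· ≠ i), (D' i j - D i j) * (t j ^ α i j * t i ^ β i j)|
      ≤ ∑ i, ∑ j ∈ Finset.univ.filter (· ≠ i), |D' i j - D i j| * R ^ p := by
    refine le_trans (Finset.abs_sum_le_sum_abs _ _) (Finset.sum_le_sum fun i _ => ?_)
    refine le_trans (Finset.abs_sum_le_sum_abs _ _) (Finset.sum_le_sum fun j hj => ?_)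
    have hji : j ≠ i := by simpa using hj
    rw [abs_mul, abs_of_nonneg (mul_nonneg (Real.rpow_nonneg (ht0 j) _)
      (Real.rpow_nonneg (ht0 i) _))]
    exact mul_le_mul_of_nonneg_left (htab i j hji.symm) (abs_nonneg _)
  have tri : |∑ i, (A' i - A i) * t i ^ (2:ℝ) - ∑ i, (B' i - B i) * t i ^ p
      + ∑ i, ∑ j ∈ Finset.univ.filter (· ≠ i), (D' i j - D i j) * (t j ^ α i j * t i ^ β i j)|
      ≤ |∑ i, (A' i - A i) * t i ^ (2:ℝ)| + |∑ i, (B' i - B i) * t i ^ p|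
        + |∑ i, ∑ j ∈ Finset.univ.filter (· ≠ i), (D' i j - D i j) * (t j ^ α i j * t i ^ β i j)| := by
    calc _ ≤ |∑ i, (A' i - A i) * t i ^ (2:ℝ) - ∑ i, (B' i - B i) * t i ^ p|
          + |∑ i, ∑ j ∈ Finset.univ.filter (· ≠ i), (D' i j - D i j) * (t j ^ α i j * t i ^ β i j)| :=
        abs_add_le _ _
      _ ≤ _ := by
        have := abs_sub (∑ i, (A' i - A i) * t i ^ (2:ℝ)) (∑ i, (B' i - B i) * t i ^ p)
        linarith
  refine le_trans tri ?_
  have h1 : ∑ i, |A' i - A i| * R ^ p = (∑ i, |A' i - A i|) * R ^ p := by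
    rw [Finset.sum_mul]
  have h2 : ∑ i, |B' i - B i| * R ^ p = (∑ i, |B' i - B i|) * R ^ p := by
    rw [Finset.sum_mul]
  have h3 : ∑ i, ∑ j ∈ Finset.univ.filter (· ≠ i), |D' i j - D i j| * R ^ p
      = (∑ i, ∑ j ∈ Finset.univ.filter (· ≠ i), |D' i j - D i j|) * R ^ p := by
    rw [Finset.sum_mul]
    exact Finset.sum_congr rfl fun i _ => by rw [Finset.sum_mul]
  have h5 : ((∑ i, (|A' i - A i| + |B' i - B i|))
        + ∑ i, ∑ j ∈ Finset.univ.filter (· ≠ i), |D' i j - D i j|) * R ^ p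
      = (∑ i, |A' i - A i|) * R ^ p + (∑ i, |B' i - B i|) * R ^ p
        + (∑ i, ∑ j ∈ Finset.univ.filter (· ≠ i), |D' i j - D i j|) * R ^ p := by
    rw [Finset.sum_add_distrib]
    ring
  linarith [b1, b2, b3]

/-- Stability lemma: if `J` has a critical point `s⁰` in `(0,∞)^M`, then every
sufficiently small perturbation `J̃` of the coefficients (keeping `d̃ ≥ 0`
symmetric) has a unique critical point `s̃⁰` in `(0,∞)^M`, which is a global
maximum and is `ε`-close to `s⁰`. -/
theorem stability_lemma
    {M : ℕ} (hM : 1 ≤ M) (p : ℝ) (hp : 2 < p)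
    (a b : Fin M → ℝ) (d α β : Fin M → Fin M → ℝ)
    (ha : ∀ i, 0 < a i) (hb : ∀ i, 0 < b i)
    (hd : ∀ i j, i ≠ j → 0 ≤ d i j)
    (hdsymm : ∀ i j, i ≠ j → d i j = d j i)
    (hα : ∀ i j, i ≠ j → 1 < α i j) (hβ : ∀ i j, i ≠ j → 1 < β i j)
    (hαβp : ∀ i j, i ≠ j → α i j + β i j = p)
    (hsymm : ∀ i j, i ≠ j → α j i = β i j)
    (s₀ : Fin M → ℝ) (hs₀ : ∀ i, 0 < s₀ i)
    -- `s⁰` is a critical point of `J` in `(0,∞)^M`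
    (hcrit : ∀ i,
      2 * a i * s₀ i - p * b i * s₀ i ^ (p - 1)
        + 2 * ∑ j ∈ Finset.univ.filter (· ≠ i),
            d i j * β i j * s₀ j ^ α i j * s₀ i ^ (β i j - 1) = 0) :
    ∀ ε > (0 : ℝ), ∃ δ > (0 : ℝ),
      ∀ (a' b' : Fin M → ℝ) (d' : Fin M → Fin M → ℝ),
        (∀ i j, i ≠ j → 0 ≤ d' i j) →
        (∀ i j, i ≠ j → d' i j = d' j i) →
        (∑ i, (|a' i - a i| + |b' i - b i|))
          + ∑ i, ∑ j ∈ Finset.univ.filter (· ≠ i), |d' i j - d i j| < δ →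
        ∃ s' : Fin M → ℝ, (∀ i, 0 < s' i) ∧
          -- `s'` is a critical point of the perturbed function `J̃`
          (∀ i, 2 * a' i * s' i - p * b' i * s' i ^ (p - 1)
            + 2 * ∑ j ∈ Finset.univ.filter (· ≠ i),
                d' i j * β i j * s' j ^ α i j * s' i ^ (β i j - 1) = 0) ∧
          -- uniqueness among critical points of `J̃` in `(0,∞)^M`
          (∀ t : Fin M → ℝ, (∀ i, 0 < t i) →
            (∀ i, 2 * a' i * t i - p * b' i * t i ^ (p - 1)
              + 2 * ∑ j ∈ Finset.univ.filter (· ≠ i),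
                  d' i j * β i j * t j ^ α i j * t i ^ (β i j - 1) = 0) →
            t = s') ∧
          -- `s'` is a global maximum of `J̃` on `(0,∞)^M`
          (∀ t : Fin M → ℝ, (∀ i, 0 < t i) →
            (∑ i, a' i * t i ^ (2 : ℝ) - ∑ i, b' i * t i ^ p
              + ∑ i, ∑ j ∈ Finset.univ.filter (· ≠ i),
                  d' i j * t j ^ α i j * t i ^ β i j) ≤
            (∑ i, a' i * s' i ^ (2 : ℝ) - ∑ i, b' i * s' i ^ p
              + ∑ i, ∑ j ∈ Finset.univ.filter (· ≠ i),
                  d' i j * s' j ^ α i j * s' i ^ β i j)) ∧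
          dist s' s₀ < ε := by
  intro ε hε
  haveI : Nonempty (Fin M) := ⟨⟨0, hM⟩⟩
  have hp0 : (0:ℝ) < p := by linarith
  set W : Fin M → ℝ := fun i => ∑ j ∈ Finset.univ.filter (· ≠ i),
    d i j * β i j * s₀ j ^ α i j * s₀ i ^ β i j with hWdef
  have hWkey : ∀ i, p * b i * s₀ i ^ p = 2 * a i * (s₀ i * s₀ i) + 2 * W i := by
    intro i
    have h := hcrit i
    have e1 : s₀ i ^ (p - 1) * s₀ i = s₀ i ^ p := by
      rw [← Real.rpow_add_one (ne_of_gt (hs₀ i)) (p - 1)]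
      norm_num
    have hsum : (∑ j ∈ Finset.univ.filter (· ≠ i),
        d i j * β i j * s₀ j ^ α i j * s₀ i ^ (β i j - 1)) * s₀ i = W i := by
      rw [hWdef, Finset.sum_mul]
      refine Finset.sum_congr rfl fun j _ => ?_
      have e2 : s₀ i ^ (β i j - 1) * s₀ i = s₀ i ^ β i j := by
        rw [← Real.rpow_add_one (ne_of_gt (hs₀ i)) _]
        norm_num
      calc d i j * β i j * s₀ j ^ α i j * s₀ i ^ (β i j - 1) * s₀ i
          = d i j * β i j * s₀ j ^ α i j * (s₀ i ^ (β i j - 1) * s₀ i) := by ring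
        _ = d i j * β i j * s₀ j ^ α i j * s₀ i ^ β i j := by rw [e2]
    have h3 : 2 * a i * (s₀ i * s₀ i) - p * b i * s₀ i ^ p + 2 * W i = 0 := by
      calc 2 * a i * (s₀ i * s₀ i) - p * b i * s₀ i ^ p + 2 * W i
          = (2 * a i * s₀ i - p * b i * s₀ i ^ (p - 1)
              + 2 * ∑ j ∈ Finset.univ.filter (· ≠ i),
                  d i j * β i j * s₀ j ^ α i j * s₀ i ^ (β i j - 1)) * s₀ i := by
            rw [mul_comm (2 * a i * s₀ i - p * b i * s₀ i ^ (p - 1)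
              + 2 * ∑ j ∈ Finset.univ.filter (· ≠ i),
                  d i j * β i j * s₀ j ^ α i j * s₀ i ^ (β i j - 1)) (s₀ i)]
            rw [← hsum, ← e1]
            ring
        _ = 0 := by rw [h]; ring
    linarith
  clear_value W
  set E : Fin M → ℝ := fun i => b i - 2 / (p * s₀ i ^ p) * W i with hEdef
  have hEpos : ∀ i, 0 < E i := by
    intro i
    have hsp : (0:ℝ) < p * s₀ i ^ p := mul_pos hp0 (Real.rpow_pos_of_pos (hs₀ i) p)
    have hnum : (0:ℝ) < p * b i * s₀ i ^ p - 2 * W i := by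
      have := hWkey i
      nlinarith [mul_pos (ha i) (mul_pos (hs₀ i) (hs₀ i))]
    have heq : E i = (p * b i * s₀ i ^ p - 2 * W i) / (p * s₀ i ^ p) := by
      rw [hEdef]
      dsimp only
      rw [eq_div_iff hsp.ne', sub_mul, mul_comm (2 / (p * s₀ i ^ p)) (W i), mul_assoc,
        div_mul_cancel₀ 2 hsp.ne']
      ring
    rw [heq]
    exact div_pos hnum hsp
  clear_value E
  have hne : (Finset.univ : Finset (Fin M)).Nonempty := Finset.univ_nonempty
  obtain ⟨ia, -, hia⟩ := Finset.exists_max_image Finset.univ a hne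
  set C₁ : ℝ := a ia + 1 with hC₁def
  have hC₁a : ∀ i, a i + 1 ≤ C₁ := fun i => by
    have := hia i (Finset.mem_univ i)
    linarith
  have hC₁0 : 0 < C₁ := by linarith [ha ia]
  clear_value C₁
  obtain ⟨ie, -, hie⟩ := Finset.exists_min_image Finset.univ E hne
  set C₂ : ℝ := E ie / 2 with hC₂def
  have hC₂pos : 0 < C₂ := by
    have := hEpos ie
    rw [hC₂def]
    linarith
  have hC₂le : ∀ i, 2 * C₂ ≤ E i := fun i => by
    have := hie i (Finset.mem_univ i)
    rw [hC₂def]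
    linarith
  clear_value C₂
  obtain ⟨X, hX1, hXb, hXneg⟩ := hfun_facts hC₁0.le hC₂pos hp
  set Js0 : ℝ := Jfun p α β a b d s₀ with hJs0def
  clear_value Js0
  set v : ℝ := (M:ℝ) * (C₁ * X ^ (2:ℝ)) + |Js0| + 2 with hvdef
  have hX2nn : (0:ℝ) ≤ X ^ (2:ℝ) := Real.rpow_nonneg (by linarith) _
  have hv0 : 0 ≤ v := by
    have : (0:ℝ) ≤ (M:ℝ) * (C₁ * X ^ (2:ℝ)) :=
      mul_nonneg (Nat.cast_nonneg M) (mul_nonneg hC₁0.le hX2nn)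
    simp only [hvdef]
    positivity
  obtain ⟨is, -, his⟩ := Finset.exists_max_image Finset.univ s₀ hne
  set R : ℝ := max (max 1 X) (max (s₀ is + 1) (Real.sqrt v)) with hRdef
  have hR1 : 1 ≤ R := le_trans (le_max_left 1 X) (le_max_left _ _)
  have hR0 : 0 < R := lt_of_lt_of_le one_pos hR1
  have hRX : X ≤ R := le_trans (le_max_right 1 X) (le_max_left _ _)
  have hRs : ∀ i, s₀ i < R := by
    intro i
    have h1 := his i (Finset.mem_univ i)
    have h2 : s₀ is + 1 ≤ R := le_trans (le_max_left _ _) (le_max_right _ _)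
    linarith
  have hRsq : v ≤ R ^ (2:ℝ) := by
    have hsq : Real.sqrt v ≤ R := le_trans (le_max_right _ _) (le_max_right _ _)
    have h1 : (Real.sqrt v) ^ (2:ℝ) = v := by
      rw [show (2:ℝ) = ((2:ℕ):ℝ) by norm_num, Real.rpow_natCast, Real.sq_sqrt hv0]
    calc v = (Real.sqrt v) ^ (2:ℝ) := h1.symm
      _ ≤ R ^ (2:ℝ) := Real.rpow_le_rpow (Real.sqrt_nonneg v) hsq (by norm_num)
  clear_value v R
  have hs₀K : s₀ ∈ Set.Icc (0 : Fin M → ℝ) (fun _ => R) := by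
    constructor <;> intro i
    · exact (hs₀ i).le
    · exact (hRs i).le
  -- coercive far-field bound for admissible coefficients
  have hcoerce : ∀ A B : Fin M → ℝ, ∀ D : Fin M → Fin M → ℝ,
      (∀ i j, i ≠ j → 0 ≤ D i j) → (∀ i j, i ≠ j → D i j = D j i) →
      (∀ i, A i ≤ C₁) →
      (∀ i, C₂ ≤ B i - 2 / (p * s₀ i ^ p) * ∑ j ∈ Finset.univ.filter (· ≠ i),
          D i j * β i j * s₀ j ^ α i j * s₀ i ^ β i j) →
      ∀ t : Fin M → ℝ, (∀ i, 0 ≤ t i) → (∀ i₀, R ≤ t i₀ →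
        Jfun p α β A B D t ≤ (M:ℝ) * (C₁ * X ^ (2:ℝ)) - R ^ (2:ℝ)) := by
    intro A B D hD' hDs' hCA hCB t ht i hiR
    have hbound := Jfun_coercive hp α β hα hβ hαβp hsymm A B D hD' hDs' s₀ hs₀ C₁ C₂
      hCA hCB t ht
    have hsplit : ∑ k, (C₁ * t k ^ (2:ℝ) - C₂ * t k ^ p)
        = (∑ k ∈ Finset.univ.erase i, (C₁ * t k ^ (2:ℝ) - C₂ * t k ^ p))
          + (C₁ * t i ^ (2:ℝ) - C₂ * t i ^ p) :=
      (Finset.sum_erase_add Finset.univ _ (Finset.mem_univ i)).symm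
    have h1 : ∑ k ∈ Finset.univ.erase i, (C₁ * t k ^ (2:ℝ) - C₂ * t k ^ p)
        ≤ (M:ℝ) * (C₁ * X ^ (2:ℝ)) := by
      calc ∑ k ∈ Finset.univ.erase i, (C₁ * t k ^ (2:ℝ) - C₂ * t k ^ p)
          ≤ ∑ _k ∈ Finset.univ.erase i, C₁ * X ^ (2:ℝ) :=
            Finset.sum_le_sum fun k _ => hXb (t k) (ht k)
        _ = ((Finset.univ.erase i).card : ℝ) * (C₁ * X ^ (2:ℝ)) := by
            rw [Finset.sum_const, nsmul_eq_mul]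
        _ ≤ (M:ℝ) * (C₁ * X ^ (2:ℝ)) := by
            apply mul_le_mul_of_nonneg_right _ (mul_nonneg hC₁0.le hX2nn)
            have : (Finset.univ.erase i).card ≤ M := by
              calc (Finset.univ.erase i).card ≤ Finset.univ.card := Finset.card_erase_le
                _ = M := by simp
            exact_mod_cast this
    have h2 : C₁ * t i ^ (2:ℝ) - C₂ * t i ^ p ≤ - t i ^ (2:ℝ) :=
      hXneg (t i) (le_trans hRX hiR)
    have h3 : R ^ (2:ℝ) ≤ t i ^ (2:ℝ) := Real.rpow_le_rpow hR0.le hiR (by norm_num)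
    calc Jfun p α β A B D t ≤ ∑ k, (C₁ * t k ^ (2:ℝ) - C₂ * t k ^ p) := hbound
      _ ≤ (M:ℝ) * (C₁ * X ^ (2:ℝ)) - R ^ (2:ℝ) := by
          rw [hsplit]
          linarith
  have hfar : ∀ A B : Fin M → ℝ, ∀ D : Fin M → Fin M → ℝ,
      (∀ i j, i ≠ j → 0 ≤ D i j) → (∀ i j, i ≠ j → D i j = D j i) →
      (∀ i, A i ≤ C₁) →
      (∀ i, C₂ ≤ B i - 2 / (p * s₀ i ^ p) * ∑ j ∈ Finset.univ.filter (· ≠ i),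
          D i j * β i j * s₀ j ^ α i j * s₀ i ^ β i j) →
      (Js0 - 1 ≤ Jfun p α β A B D s₀) →
      ∀ t : Fin M → ℝ, (∀ i, 0 ≤ t i) → (∀ i₀, R ≤ t i₀ →
        Jfun p α β A B D t < Jfun p α β A B D s₀) := by
    intro A B D hD' hDs' hCA hCB hnear t ht i hiR
    have h1 := hcoerce A B D hD' hDs' hCA hCB t ht i hiR
    have h2 : (M:ℝ) * (C₁ * X ^ (2:ℝ)) - R ^ (2:ℝ) ≤ - |Js0| - 2 := by
      have := hRsq
      simp only [hvdef] at this
      linarith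
    have h3 : - |Js0| ≤ Js0 := neg_abs_le Js0
    linarith
  -- package applied to admissible coefficients
  have hpack : ∀ A B : Fin M → ℝ, ∀ D : Fin M → Fin M → ℝ,
      (∀ i, 0 < A i) → (∀ i, 0 < B i) →
      (∀ i j, i ≠ j → 0 ≤ D i j) → (∀ i j, i ≠ j → D i j = D j i) →
      (∀ i, A i ≤ C₁) →
      (∀ i, C₂ ≤ B i - 2 / (p * s₀ i ^ p) * ∑ j ∈ Finset.univ.filter (· ≠ i),
          D i j * β i j * s₀ j ^ α i j * s₀ i ^ β i j) →
      (Js0 - 1 ≤ Jfun p α β A B D s₀) →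
      ∃ m, m ∈ Set.Icc (0 : Fin M → ℝ) (fun _ => R) ∧
        IsMaxOn (Jfun p α β A B D) (Set.Icc (0 : Fin M → ℝ) (fun _ => R)) m ∧
        (∀ i, 0 < m i) ∧ (∀ i, m i < R) ∧
        ∀ i, 2 * A i * m i - p * B i * m i ^ (p - 1)
          + 2 * ∑ j ∈ Finset.univ.filter (· ≠ i),
              D i j * β i j * m j ^ α i j * m i ^ (β i j - 1) = 0 := by
    intro A B D hA' hB' hD' hDs' hCA hCB hnear
    exact exists_crit_max hp α β hα hβ hsymm A B D hA' hB' hD' hDs' hR0 s₀ hs₀K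
      (fun t htK h => by
        obtain ⟨i, hti⟩ := h
        exact hfar A B D hD' hDs' hCA hCB hnear t (fun k => htK.1 k) i (le_of_eq hti.symm))
  have hCAd : ∀ i, a i ≤ C₁ := fun i => by linarith [hC₁a i]
  have hCBd : ∀ i, C₂ ≤ b i - 2 / (p * s₀ i ^ p) * ∑ j ∈ Finset.univ.filter (· ≠ i),
      d i j * β i j * s₀ j ^ α i j * s₀ i ^ β i j := by
    intro i
    have h1 := hC₂le i
    have h2 : E i = b i - 2 / (p * s₀ i ^ p) * ∑ j ∈ Finset.univ.filter (· ≠ i),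
        d i j * β i j * s₀ j ^ α i j * s₀ i ^ β i j := by
      simp only [hEdef, hWdef]
    linarith [hC₂pos]
  obtain ⟨m₀, hm₀K, hm₀max, hm₀pos, hm₀lt, hm₀crit⟩ :=
    hpack a b d ha hb hd hdsymm hCAd hCBd (by rw [hJs0def]; linarith)
  have hm₀eq : m₀ = s₀ := by
    have h1 := crit_le hM hp α β hα hβ hαβp a b d ha hb hd s₀ m₀ hs₀ hm₀pos hcrit hm₀crit
    have h2 := crit_le hM hp α β hα hβ hαβp a b d ha hb hd m₀ s₀ hm₀pos hs₀ hm₀crit hcrit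
    exact funext fun i => le_antisymm (h1 i) (h2 i)
  have hs₀max : ∀ t ∈ Set.Icc (0 : Fin M → ℝ) (fun _ => R), Jfun p α β a b d t ≤ Js0 := by
    intro t ht
    have h := hm₀max ht
    simp only [Set.mem_setOf_eq] at h
    rw [hm₀eq] at h
    rw [hJs0def]
    exact h
  -- the gap
  have hgapex : ∃ g > (0:ℝ), ∀ t ∈ Set.Icc (0 : Fin M → ℝ) (fun _ => R),
      ε ≤ dist t s₀ → Jfun p α β a b d t ≤ Js0 - g := by
    by_cases hCne : (Set.Icc (0 : Fin M → ℝ) (fun _ => R) ∩ {t | ε ≤ dist t s₀}).Nonempty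
    · have hclosed : IsClosed {t : Fin M → ℝ | ε ≤ dist t s₀} :=
        isClosed_le continuous_const (Continuous.dist continuous_id continuous_const)
      have hcomp := (isCompact_Icc (a := (0 : Fin M → ℝ)) (b := fun _ => R)).inter_right hclosed
      have hcont := (continuous_Jfun hp0 α β
        (fun i j hij => lt_trans one_pos (hα i j hij))
        (fun i j hij => lt_trans one_pos (hβ i j hij)) a b d).continuousOn
        (s := Set.Icc (0 : Fin M → ℝ) (fun _ => R) ∩ {t | ε ≤ dist t s₀})
      obtain ⟨tm, htm, htmax⟩ := hcomp.exists_isMaxOn hCne hcont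
      have hlt : Jfun p α β a b d tm < Js0 := by
        rcases (hs₀max tm htm.1).lt_or_eq with h | h
        · exact h
        · exfalso
          have hmaxK : IsMaxOn (Jfun p α β a b d)
              (Set.Icc (0 : Fin M → ℝ) (fun _ => R)) tm := by
            intro t ht
            simp only [Set.mem_setOf_eq]
            rw [h]
            exact hs₀max t ht
          have hposm := maxOn_pos hp α β hα hβ a b d ha hb hd hR0 tm htm.1 hmaxK
          have hltR : ∀ i, tm i < R := by
            intro i
            rcases (htm.1.2 i).lt_or_eq with h' | h'
            · exact h'
            · exfalso
              have h3 := hfar a b d hd hdsymm hCAd hCBd (by rw [hJs0def]; linarith)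
                tm (fun k => htm.1.1 k) i (le_of_eq h'.symm)
              have h4 : Jfun p α β a b d s₀ = Js0 := hJs0def.symm
              linarith
          have hcritm : ∀ i, 2 * a i * tm i - p * b i * tm i ^ (p - 1)
              + 2 * ∑ j ∈ Finset.univ.filter (· ≠ i),
                  d i j * β i j * tm j ^ α i j * tm i ^ (β i j - 1) = 0 := fun i =>
            localmax_crit p α β a b d hdsymm hsymm tm i (hposm i)
              (isLocalMax_coord α β a b d tm htm.1 hmaxK i (hposm i) (hltR i))
          have heqm : tm = s₀ := by
            have h1 := crit_le hM hp α β hα hβ hαβp a b d ha hb hd s₀ tm hs₀ hposm hcrit hcritm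
            have h2 := crit_le hM hp α β hα hβ hαβp a b d ha hb hd tm s₀ hposm hs₀ hcritm hcrit
            exact funext fun i => le_antisymm (h1 i) (h2 i)
          have hdist : ε ≤ dist tm s₀ := htm.2
          rw [heqm, dist_self] at hdist
          linarith
      refine ⟨Js0 - Jfun p α β a b d tm, by linarith, ?_⟩
      intro t htK htd
      have h := htmax (Set.mem_inter htK htd)
      simp only [Set.mem_setOf_eq] at h
      linarith
    · exact ⟨1, one_pos, fun t htK htd => absurd ⟨t, htK, htd⟩ hCne⟩
  obtain ⟨g, hg0, hgap⟩ := hgapex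
  -- the constants for δ
  set T : Fin M → ℝ := fun i => ∑ j ∈ Finset.univ.filter (· ≠ i),
    β i j * s₀ j ^ α i j * s₀ i ^ β i j with hTdef
  have hTnn : ∀ i, 0 ≤ T i := by
    intro i
    rw [hTdef]
    apply Finset.sum_nonneg
    intro j hj
    have hji : j ≠ i := by simpa using hj
    have := hβ i j hji.symm
    have h1 : (0:ℝ) ≤ β i j := by linarith
    exact mul_nonneg (mul_nonneg h1 (Real.rpow_nonneg (hs₀ j).le _))
      (Real.rpow_nonneg (hs₀ i).le _)
  clear_value T
  set Q : Fin M → ℝ := fun i => 1 + 2 / (p * s₀ i ^ p) * T i with hQdef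
  have hQpos : ∀ i, 0 < Q i := by
    intro i
    have h1 : (0:ℝ) < p * s₀ i ^ p := mul_pos hp0 (Real.rpow_pos_of_pos (hs₀ i) p)
    have h2 : (0:ℝ) ≤ 2 / (p * s₀ i ^ p) * T i :=
      mul_nonneg (div_nonneg (by norm_num) h1.le) (hTnn i)
    rw [hQdef]
    dsimp only
    linarith
  clear_value Q
  obtain ⟨iq, -, hiq⟩ := Finset.exists_min_image Finset.univ (fun i => E i / (2 * Q i)) hne
  obtain ⟨iA, -, hiA⟩ := Finset.exists_min_image Finset.univ a hne
  obtain ⟨iB, -, hiB⟩ := Finset.exists_min_image Finset.univ b hne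
  have hRp0 : (0:ℝ) < R ^ p := Real.rpow_pos_of_pos hR0 p
  set δ : ℝ := min 1 (min (a iA / 2) (min (b iB / 2)
    (min (E iq / (2 * Q iq)) (min g 1 / (3 * R ^ p))))) with hδdef
  have hc1 : δ ≤ a iA / 2 := le_trans (min_le_right _ _) (min_le_left _ _)
  have hc2 : δ ≤ b iB / 2 := le_trans (min_le_right _ _)
    (le_trans (min_le_right _ _) (min_le_left _ _))
  have hc3 : δ ≤ E iq / (2 * Q iq) := le_trans (min_le_right _ _)
    (le_trans (min_le_right _ _) (le_trans (min_le_right _ _) (min_le_left _ _)))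
  have hc4 : δ ≤ min g 1 / (3 * R ^ p) := le_trans (min_le_right _ _)
    (le_trans (min_le_right _ _) (le_trans (min_le_right _ _) (min_le_right _ _)))
  have hδ1 : δ ≤ 1 := min_le_left _ _
  have hδ0 : 0 < δ := by
    rw [hδdef]
    apply lt_min one_pos
    apply lt_min (by linarith [ha iA])
    apply lt_min (by linarith [hb iB])
    apply lt_min
    · exact div_pos (hEpos iq) (mul_pos two_pos (hQpos iq))
    · exact div_pos (lt_min hg0 one_pos) (by positivity)
  clear_value δ
  refine ⟨δ, hδ0, ?_⟩
  intro a' b' d' hd' hd'symm hsum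
  -- individual coefficient bounds
  have hS1nn : (0:ℝ) ≤ ∑ i, (|a' i - a i| + |b' i - b i|) :=
    Finset.sum_nonneg fun i _ => by positivity
  have hS2nn : (0:ℝ) ≤ ∑ i, ∑ j ∈ Finset.univ.filter (· ≠ i), |d' i j - d i j| :=
    Finset.sum_nonneg fun i _ => Finset.sum_nonneg fun j _ => abs_nonneg _
  have hta : ∀ i, |a' i - a i| ≤ δ := by
    intro i
    have h1 : |a' i - a i| + |b' i - b i| ≤ ∑ k, (|a' k - a k| + |b' k - b k|) :=
      Finset.single_le_sum (f := fun k => |a' k - a k| + |b' k - b k|)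
        (fun k _ => by positivity) (Finset.mem_univ i)
    linarith [abs_nonneg (b' i - b i)]
  have htb : ∀ i, |b' i - b i| ≤ δ := by
    intro i
    have h1 : |a' i - a i| + |b' i - b i| ≤ ∑ k, (|a' k - a k| + |b' k - b k|) :=
      Finset.single_le_sum (f := fun k => |a' k - a k| + |b' k - b k|)
        (fun k _ => by positivity) (Finset.mem_univ i)
    linarith [abs_nonneg (a' i - a i)]
  have htd : ∀ i j, j ≠ i → |d' i j - d i j| ≤ δ := by
    intro i j hji
    have h1 : |d' i j - d i j| ≤ ∑ k ∈ Finset.univ.filter (· ≠ i), |d' i k - d i k| :=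
      Finset.single_le_sum (f := fun k => |d' i k - d i k|) (fun k _ => abs_nonneg _)
        (Finset.mem_filter.mpr ⟨Finset.mem_univ j, hji⟩)
    have h2 : ∑ k ∈ Finset.univ.filter (· ≠ i), |d' i k - d i k|
        ≤ ∑ l, ∑ k ∈ Finset.univ.filter (· ≠ l), |d' l k - d l k| :=
      Finset.single_le_sum (f := fun l => ∑ k ∈ Finset.univ.filter (· ≠ l), |d' l k - d l k|)
        (fun l _ => Finset.sum_nonneg fun k _ => abs_nonneg _) (Finset.mem_univ i)
    linarith
  -- admissibility of perturbed coefficients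
  have hA' : ∀ i, 0 < a' i := by
    intro i
    have h3 := abs_le.mp (hta i)
    have h4 := hiA i (Finset.mem_univ i)
    linarith [ha i]
  have hB' : ∀ i, 0 < b' i := by
    intro i
    have h3 := abs_le.mp (htb i)
    have h4 := hiB i (Finset.mem_univ i)
    linarith [hb i]
  have hCA' : ∀ i, a' i ≤ C₁ := by
    intro i
    have h3 := abs_le.mp (hta i)
    have h4 := hC₁a i
    linarith
  have hCB' : ∀ i, C₂ ≤ b' i - 2 / (p * s₀ i ^ p) * ∑ j ∈ Finset.univ.filter (· ≠ i),
      d' i j * β i j * s₀ j ^ α i j * s₀ i ^ β i j := by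
    intro i
    have hsp : (0:ℝ) < p * s₀ i ^ p := mul_pos hp0 (Real.rpow_pos_of_pos (hs₀ i) p)
    have h5 : |(∑ j ∈ Finset.univ.filter (· ≠ i),
        d' i j * β i j * s₀ j ^ α i j * s₀ i ^ β i j)
        - ∑ j ∈ Finset.univ.filter (· ≠ i),
        d i j * β i j * s₀ j ^ α i j * s₀ i ^ β i j| ≤ δ * T i := by
      rw [← Finset.sum_sub_distrib]
      refine le_trans (Finset.abs_sum_le_sum_abs _ _) ?_
      rw [hTdef, Finset.mul_sum]
      apply Finset.sum_le_sum
      intro j hj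
      have hji : j ≠ i := by simpa using hj
      have hβnn : (0:ℝ) ≤ β i j := by linarith [hβ i j hji.symm]
      have hcnn : (0:ℝ) ≤ β i j * s₀ j ^ α i j * s₀ i ^ β i j :=
        mul_nonneg (mul_nonneg hβnn (Real.rpow_nonneg (hs₀ j).le _))
          (Real.rpow_nonneg (hs₀ i).le _)
      calc |d' i j * β i j * s₀ j ^ α i j * s₀ i ^ β i j
            - d i j * β i j * s₀ j ^ α i j * s₀ i ^ β i j|
          = |d' i j - d i j| * (β i j * s₀ j ^ α i j * s₀ i ^ β i j) := by
            rw [show d' i j * β i j * s₀ j ^ α i j * s₀ i ^ β i j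
              - d i j * β i j * s₀ j ^ α i j * s₀ i ^ β i j
              = (d' i j - d i j) * (β i j * s₀ j ^ α i j * s₀ i ^ β i j) by ring,
              abs_mul, abs_of_nonneg hcnn]
        _ ≤ δ * (β i j * s₀ j ^ α i j * s₀ i ^ β i j) :=
            mul_le_mul_of_nonneg_right (htd i j hji) hcnn
    have h6 : (∑ j ∈ Finset.univ.filter (· ≠ i),
        d' i j * β i j * s₀ j ^ α i j * s₀ i ^ β i j) ≤ W i + δ * T i := by
      have h := (abs_le.mp h5).2
      have hW : W i = ∑ j ∈ Finset.univ.filter (· ≠ i),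
          d i j * β i j * s₀ j ^ α i j * s₀ i ^ β i j := by rw [hWdef]
      linarith
    have h7 : 2 / (p * s₀ i ^ p) * (∑ j ∈ Finset.univ.filter (· ≠ i),
        d' i j * β i j * s₀ j ^ α i j * s₀ i ^ β i j)
        ≤ 2 / (p * s₀ i ^ p) * (W i + δ * T i) :=
      mul_le_mul_of_nonneg_left h6 (by positivity)
    have h8 : δ * (2 * Q i) ≤ E i := by
      have h81 : δ ≤ E i / (2 * Q i) := le_trans hc3 (hiq i (Finset.mem_univ i))
      exact (le_div_iff₀ (mul_pos two_pos (hQpos i))).mp h81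
    have h9 : E i = b i - 2 / (p * s₀ i ^ p) * W i := by rw [hEdef]
    have h10 : Q i = 1 + 2 / (p * s₀ i ^ p) * T i := by rw [hQdef]
    have h10' : δ * Q i = δ + 2 / (p * s₀ i ^ p) * (δ * T i) := by rw [h10]; ring
    have h7' : 2 / (p * s₀ i ^ p) * (W i + δ * T i)
        = 2 / (p * s₀ i ^ p) * W i + 2 / (p * s₀ i ^ p) * (δ * T i) := by ring
    have h3 := abs_le.mp (htb i)
    have h11 := hC₂le i
    linarith
  have hpert : ∀ t : Fin M → ℝ, (∀ i, 0 ≤ t i) → (∀ i, t i ≤ R) →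
      |Jfun p α β a' b' d' t - Jfun p α β a b d t| ≤ δ * R ^ p := by
    intro t h0 hR'
    have h := Jfun_pert hp α β hα hβ hαβp a b a' b' d d' hR1 t h0 hR'
    have h2 : ((∑ i, (|a' i - a i| + |b' i - b i|))
        + ∑ i, ∑ j ∈ Finset.univ.filter (· ≠ i), |d' i j - d i j|) * R ^ p ≤ δ * R ^ p :=
      mul_le_mul_of_nonneg_right hsum.le hRp0.le
    linarith
  have hδRp : δ * R ^ p ≤ min g 1 / 3 := by
    have h := (le_div_iff₀ (by positivity : (0:ℝ) < 3 * R ^ p)).mp hc4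
    linarith
  have hming : min g 1 ≤ g := min_le_left _ _
  have hmin1 : min g 1 ≤ 1 := min_le_right _ _
  have hnear' : Js0 - 1 ≤ Jfun p α β a' b' d' s₀ := by
    have h := hpert s₀ (fun i => (hs₀ i).le) (fun i => (hRs i).le)
    have h2 := (abs_le.mp h).1
    have h3 : Jfun p α β a b d s₀ = Js0 := hJs0def.symm
    linarith
  obtain ⟨s', hs'K, hs'max, hs'pos, hs'lt, hs'crit⟩ :=
    hpack a' b' d' hA' hB' hd' hd'symm hCA' hCB' hnear'
  refine ⟨s', hs'pos, hs'crit, ?_, ?_, ?_⟩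
  · -- uniqueness
    intro t ht hctt
    have h1 := crit_le hM hp α β hα hβ hαβp a' b' d' hA' hB' hd' s' t hs'pos ht hs'crit hctt
    have h2 := crit_le hM hp α β hα hβ hαβp a' b' d' hA' hB' hd' t s' ht hs'pos hctt hs'crit
    exact funext fun i => le_antisymm (h1 i) (h2 i)
  · -- global max
    intro t ht
    show Jfun p α β a' b' d' t ≤ Jfun p α β a' b' d' s'
    by_cases htK : t ∈ Set.Icc (0 : Fin M → ℝ) (fun _ => R)
    · have h := hs'max htK
      simpa using h
    · have h2 : ∃ i, ¬ t i ≤ R := by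
        by_contra hcon
        push_neg at hcon
        exact htK ⟨fun i => (ht i).le, fun i => hcon i⟩
      obtain ⟨i, hiR⟩ := h2
      have h3 := hfar a' b' d' hd' hd'symm hCA' hCB' hnear' t (fun k => (ht k).le) i
        (by linarith [not_le.mp hiR])
      have h4 := hs'max hs₀K
      simp only [Set.mem_setOf_eq] at h4
      linarith
  · -- distance
    by_contra hcon
    push_neg at hcon
    have h1 := hgap s' hs'K hcon
    have hp1 := hpert s₀ (fun i => (hs₀ i).le) (fun i => (hRs i).le)
    have hp2 := hpert s' (fun i => hs'K.1 i) (fun i => hs'K.2 i)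
    have h2 := hs'max hs₀K
    simp only [Set.mem_setOf_eq] at h2
    have h3 : Jfun p α β a b d s₀ = Js0 := hJs0def.symm
    have h4 := (abs_le.mp hp1).1
    have h5 := (abs_le.mp hp2).2
    linarith
end
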